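/- arXiv:1902.00973 — 6 statements merged into one kernel-verified Lean document; each statement's English description precedes it below -/
import Mathlib

section
/- Let P ⊆ ℝ^n be a nonempty lattice polytope and Q ⊆ ℝ^n a nonempty lattice polytope. Let ι denote the injective ℂ-algebra embedding of the Laurent polynomial ring ℂ[ℤ^n] into the field of rational functions ℂ(x_1,…,x_n) (the fraction field of ℂ[x_1,…,x_n]). Suppose d ≥ 1 and c_1,…,c_d ∈ ℂ(x_1,…,x_n) with c_d ≠ 0 are such that ι(σ_{(k+d)P+Q}) = Σ_{j=1}^d c_j · ι(σ_{(k+d−j)P+Q}) for all integers k ≥ 0. Then the polynomial ∏_{v ∈ V(P)} (X − x^v) divides X^d − Σ_{j=1}^d c_j X^{d−j} in ℂ(x_1,…,x_n)[X]. In particular, ∏_{v ∈ V(P)} (X − x^v) is the minimal characteristic polynomial of a linear recursion satisfied by the sequence {σ_{kP+Q}(x)}_{k≥0}. -/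
open scoped BigOperators Pointwise

noncomputable section

/-- Coercion of an integer lattice point to a real vector. -/
def latC {n : ℕ} (m : Fin n → ℤ) : Fin n → ℝ := fun i => (m i : ℝ)

/-- A polytope is the convex hull of a finite set of points in `ℝ^n`. -/
def IsPolytope {n : ℕ} (S : Set (Fin n → ℝ)) : Prop :=
  ∃ F : Finset (Fin n → ℝ), S = convexHull ℝ (F : Set (Fin n → ℝ))

/-- A lattice polytope is the convex hull of finitely many lattice points. -/
def IsLatticePolytope {n : ℕ} (S : Set (Fin n → ℝ)) : Prop :=
  ∃ F : Finset (Fin n → ℤ), S = convexHull ℝ (latC '' (F : Set (Fin n → ℤ)))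

/-- The integer point transform `σ_S = ∑_{m ∈ S ∩ ℤ^n} x^m ∈ ℂ[ℤ^n]`. -/
def intPtTransform {n : ℕ} (S : Set (Fin n → ℝ)) : AddMonoidAlgebra ℂ (Fin n → ℤ) :=
  ∑ᶠ m ∈ {m : Fin n → ℤ | latC m ∈ S}, AddMonoidAlgebra.single m 1

namespace CPM

variable {n : ℕ}

lemma latC_add (a b : Fin n → ℤ) : latC (a + b) = latC a + latC b := by
  funext i; simp [latC]

lemma latC_sub (a b : Fin n → ℤ) : latC (a - b) = latC a - latC b := by
  funext i; simp [latC]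

lemma latC_zero : latC (0 : Fin n → ℤ) = 0 := by funext i; simp [latC]

lemma latC_nsmul (m : ℕ) (a : Fin n → ℤ) : latC (m • a) = (m : ℝ) • latC a := by
  funext i; simp [latC]

lemma latC_inj : Function.Injective (latC (n := n)) := by
  intro a b hab
  funext i
  have := congrFun hab i
  simpa [latC] using this

lemma lattice_finite {S : Set (Fin n → ℝ)} (hS : Bornology.IsBounded S) :
    {m : Fin n → ℤ | latC m ∈ S}.Finite := by
  obtain ⟨r, hr⟩ := hS.subset_closedBall 0
  set R : ℤ := ⌈max r 0⌉ with hR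
  have hrR : max r 0 ≤ (R : ℝ) := Int.le_ceil _
  have hr0 : (0:ℝ) ≤ max r 0 := le_max_right _ _
  apply Set.Finite.subset (Set.Finite.pi (t := fun _ : Fin n => (Set.Icc (-R) R)) (fun i => Set.finite_Icc _ _))
  intro m hm
  have hmem : latC m ∈ Metric.closedBall (0 : Fin n → ℝ) r := hr hm
  rw [Metric.mem_closedBall, dist_zero_right] at hmem
  have hmem' : ‖latC m‖ ≤ max r 0 := le_trans hmem (le_max_left _ _)
  rw [pi_norm_le_iff_of_nonneg hr0] at hmem'
  intro i _
  have hi := hmem' i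
  rw [Real.norm_eq_abs, abs_le] at hi
  have h1 : (-R : ℝ) ≤ (m i : ℝ) := le_trans (neg_le_neg hrR) hi.1
  have h2 : ((m i : ℝ)) ≤ (R : ℝ) := le_trans hi.2 hrR
  constructor
  · exact_mod_cast h1
  · exact_mod_cast h2


lemma intPt_eq {S : Set (Fin n → ℝ)} (h : {m : Fin n → ℤ | latC m ∈ S}.Finite) :
    intPtTransform S = ∑ m ∈ h.toFinset, AddMonoidAlgebra.single m 1 := by
  rw [intPtTransform, ← finsum_mem_coe_finset, h.coe_toFinset]

lemma mul_sum_single_apply (c : AddMonoidAlgebra ℂ (Fin n → ℤ)) (L : Finset (Fin n → ℤ))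
    (T : Fin n → ℤ) :
    (c * ∑ m' ∈ L, AddMonoidAlgebra.single m' (1:ℂ)).coeff T = ∑ m' ∈ L, c.coeff (T - m') := by
  rw [Finset.mul_sum, AddMonoidAlgebra.coeff_sum, Finset.sum_apply']
  refine Finset.sum_congr rfl fun m' _ => ?_
  rw [AddMonoidAlgebra.coeff_mul_single_apply, mul_one, sub_eq_add_neg]

lemma sum_shift (c : AddMonoidAlgebra ℂ (Fin n → ℤ)) (L : Finset (Fin n → ℤ))
    (T : Fin n → ℤ) :
    ∑ m' ∈ L, c.coeff (T - m') = ∑ u ∈ c.coeff.support, if T - u ∈ L then c.coeff u else 0 := by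
  classical
  rw [← Finset.sum_filter]
  rw [← Finset.sum_filter_of_ne (s := L) (f := fun m' => c.coeff (T - m'))
      (p := fun m' => T - m' ∈ c.coeff.support) (fun x _ hx => Finsupp.mem_support_iff.mpr hx)]
  refine Finset.sum_nbij' (i := fun m' => T - m') (j := fun u => T - u) ?_ ?_ ?_ ?_ ?_
  · intro a ha
    rw [Finset.mem_filter] at ha ⊢
    exact ⟨ha.2, by rw [sub_sub_cancel]; exact ha.1⟩
  · intro a ha
    rw [Finset.mem_filter] at ha ⊢
    exact ⟨ha.2, by rw [sub_sub_cancel]; exact ha.1⟩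
  · intro a _; simp
  · intro a _; simp
  · intro a _; rfl


lemma hull_le {f : (Fin n → ℝ) →L[ℝ] ℝ} {T : Set (Fin n → ℝ)} {cc : ℝ}
    (h : ∀ u ∈ T, f u ≤ cc) : ∀ p ∈ convexHull ℝ T, f p ≤ cc := by
  intro p hp
  have : convexHull ℝ T ⊆ {w | f w ≤ cc} :=
    convexHull_min h (convex_halfSpace_le ⟨map_add f, map_smul f⟩ cc)
  exact this hp

lemma strict_on_hull {S : Set (Fin n → ℝ)} (hS : S.Finite) (f : (Fin n → ℝ) →L[ℝ] ℝ)
    {v : Fin n → ℝ} (hv : v ∈ S) (h : ∀ u ∈ S, u ≠ v → f u < f v) :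
    ∀ p ∈ convexHull ℝ S, p ≠ v → f p < f v := by
  classical
  intro p hp hpv
  rcases Set.eq_empty_or_nonempty (S \ {v}) with hemp | hne
  · have hSv : S ⊆ {v} := by
      intro u hu
      rcases eq_or_ne u v with rfl | hne'
      · exact rfl
      · exact absurd (Set.mem_diff_of_mem hu hne') (by rw [hemp]; exact Set.notMem_empty u)
    have : p ∈ convexHull ℝ ({v} : Set (Fin n → ℝ)) :=
      convexHull_mono hSv hp
    rw [convexHull_singleton] at this
    exact absurd this hpv
  · have hSd : (S \ ({v} : Set (Fin n → ℝ))).Finite := hS.diff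
    obtain ⟨u0, hu0, hu0max⟩ := Finset.exists_max_image hSd.toFinset f
      (by rwa [Set.Finite.toFinset_nonempty])
    rw [Set.Finite.mem_toFinset] at hu0
    have hu0lt : f u0 < f v := h u0 hu0.1 hu0.2
    have hK : ∀ y ∈ convexHull ℝ (S \ {v}), f y ≤ f u0 :=
      hull_le (fun u hu => hu0max u (by rwa [Set.Finite.mem_toFinset]))
    have hSeq : S = insert v (S \ {v}) := by
      rw [Set.insert_diff_singleton, Set.insert_eq_of_mem hv]
    rw [hSeq, convexHull_insert hne] at hp
    rw [mem_convexJoin] at hp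
    obtain ⟨x, hx, y, hy, hseg⟩ := hp
    rw [Set.mem_singleton_iff] at hx
    rw [hx] at hseg
    obtain ⟨a, b, ha, hb, hab, habp⟩ := hseg
    have hyv : f y < f v := lt_of_le_of_lt (hK y hy) hu0lt
    have hfp : f p = a * f v + b * f y := by
      rw [← habp]; simp [smul_eq_mul]
    rcases eq_or_lt_of_le hb with hb0 | hbpos
    · exfalso
      apply hpv
      rw [← habp, ← hb0]
      have : a = 1 := by linarith
      simp [this]
    · rw [hfp]
      have h1 : b * f y < b * f v := mul_lt_mul_of_pos_left hyv hbpos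
      have h2 : a * f v + b * f v = f v := by rw [← add_mul, hab, one_mul]
      linarith


open Polynomial in
lemma exists_sep_vector (D : Set (Fin n → ℝ)) (hD : D.Finite) :
    ∃ y : Fin n → ℝ, ∀ q ∈ D, ∀ q' ∈ D, q ≠ q' → (∑ i, y i * (q i - q' i)) ≠ 0 := by
  classical
  set Dm : Set (Fin n → ℝ) := {z | ∃ q ∈ D, ∃ q' ∈ D, q ≠ q' ∧ z = q - q'} with hDm
  have hDmfin : Dm.Finite := by
    apply Set.Finite.subset (Set.Finite.image2 (fun a b => a - b) hD hD)
    rintro z ⟨q, hq, q', hq', _, rfl⟩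
    exact Set.mem_image2_of_mem hq hq'
  have hDmne : ∀ z ∈ Dm, z ≠ 0 := by
    rintro z ⟨q, _, q', _, hne, rfl⟩
    exact sub_ne_zero.mpr hne
  set pol : (Fin n → ℝ) → Polynomial ℝ := fun z => ∑ i : Fin n, C (z i) * X ^ (i : ℕ) with hpol
  have hpolne : ∀ z ∈ Dm, pol z ≠ 0 := by
    intro z hz
    obtain ⟨i0, hi0⟩ := Function.ne_iff.mp (hDmne z hz)
    intro h0
    apply hi0
    have := congrArg (fun p => Polynomial.coeff p (i0 : ℕ)) h0
    simp only [hpol, Polynomial.finset_sum_coeff, Polynomial.coeff_C_mul,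
      Polynomial.coeff_X_pow, Polynomial.coeff_zero] at this
    rw [Finset.sum_eq_single i0] at this
    · simpa using this
    · intro b _ hb
      have : (b : ℕ) ≠ (i0 : ℕ) := fun hc => hb (Fin.val_injective hc)
      simp [Ne.symm this]
    · simp
  have hroots : (⋃ z ∈ Dm, {t : ℝ | (pol z).IsRoot t}).Finite :=
    Set.Finite.biUnion hDmfin (fun z hz => Polynomial.finite_setOf_isRoot (hpolne z hz))
  obtain ⟨t, ht⟩ := (hroots.infinite_compl).nonempty
  refine ⟨fun i => t ^ (i : ℕ), ?_⟩
  intro q hq q' hq' hne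
  have hz : q - q' ∈ Dm := ⟨q, hq, q', hq', hne, rfl⟩
  have hnr : ¬ (pol (q - q')).IsRoot t := by
    intro hr
    exact ht (Set.mem_biUnion hz hr)
  intro h0
  apply hnr
  rw [Polynomial.IsRoot, hpol]
  rw [Polynomial.eval_finset_sum]
  rw [← h0]
  refine Finset.sum_congr rfl fun i _ => ?_
  simp [mul_comm]


lemma exists_good_functional (FP FQ : Finset (Fin n → ℤ)) {v : Fin n → ℝ}
    (hv : v ∈ Set.extremePoints ℝ (convexHull ℝ (latC '' (FP : Set (Fin n → ℤ)))))
    (hQne : (convexHull ℝ (latC '' (FQ : Set (Fin n → ℤ)))).Nonempty) :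
    ∃ (ℓ : (Fin n → ℝ) →L[ℝ] ℝ) (w : Fin n → ℤ),
      latC w ∈ convexHull ℝ (latC '' (FQ : Set (Fin n → ℤ))) ∧
      (∀ p ∈ convexHull ℝ (latC '' (FP : Set (Fin n → ℤ))), p ≠ v → ℓ p < ℓ v) ∧
      (∀ q ∈ convexHull ℝ (latC '' (FQ : Set (Fin n → ℤ))), q ≠ latC w → ℓ q < ℓ (latC w)) := by
  classical
  set S : Set (Fin n → ℝ) := latC '' (FP : Set (Fin n → ℤ)) with hSdef
  have hSfin : S.Finite := (FP.finite_toSet).image _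
  have hvS : v ∈ S := extremePoints_convexHull_subset hv
  have hvnot : v ∉ convexHull ℝ (S \ {v}) := by
    intro hcon
    have h1 := ((convex_convexHull ℝ S).mem_extremePoints_iff_convex_diff).mp hv
    have h2 : convexHull ℝ (S \ {v}) ⊆ (convexHull ℝ S) \ {v} :=
      convexHull_min (Set.diff_subset_diff_left (subset_convexHull ℝ S)) h1.2
    exact (h2 hcon).2 rfl
  have hclosed : IsClosed (convexHull ℝ (S \ {v})) :=
    ((hSfin.diff (t := {v})).isCompact_convexHull ℝ).isClosed
  obtain ⟨f, u, hfu, hufv⟩ :=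
    geometric_hahn_banach_closed_point (convex_convexHull ℝ _) hclosed hvnot
  have hf : ∀ u' ∈ S, u' ≠ v → f u' < f v := fun u' hu' hne =>
    lt_trans (hfu u' (subset_convexHull ℝ _ ⟨hu', hne⟩)) hufv
  set D : Set (Fin n → ℝ) := latC '' (FQ : Set (Fin n → ℤ)) with hDdef
  have hDfin : D.Finite := (FQ.finite_toSet).image _
  have hDne : D.Nonempty := by
    rcases Set.eq_empty_or_nonempty D with he | h
    · rw [he, convexHull_empty] at hQne
      exact absurd hQne Set.not_nonempty_empty
    · exact h
  obtain ⟨y, hy⟩ := exists_sep_vector D hDfin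
  set glin : (Fin n → ℝ) →ₗ[ℝ] ℝ :=
    { toFun := fun x => ∑ i, y i * x i
      map_add' := by intro a b; simp [mul_add, Finset.sum_add_distrib]
      map_smul' := by
        intro r a
        simp only [Pi.smul_apply, smul_eq_mul, RingHom.id_apply, Finset.mul_sum]
        exact Finset.sum_congr rfl fun i _ => by ring } with hglin
  set g : (Fin n → ℝ) →L[ℝ] ℝ := LinearMap.toContinuousLinearMap glin with hgdef
  have hg : ∀ x, g x = ∑ i, y i * x i := fun x => rfl
  have hgsub : ∀ q q', g q - g q' = ∑ i, y i * (q i - q' i) := by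
    intro q q'
    rw [hg, hg, ← Finset.sum_sub_distrib]
    exact Finset.sum_congr rfl fun i _ => by ring
  set TS : Finset (Fin n → ℝ) := hSfin.toFinset.filter (· ≠ v) with hTS
  set δ : (Fin n → ℝ) → ℝ := fun u' => (f v - f u') / (|g u'| + |g v| + 1) with hδ
  have hδpos : ∀ u' ∈ TS, 0 < δ u' := by
    intro u' hu'
    rw [hTS, Finset.mem_filter, Set.Finite.mem_toFinset] at hu'
    have := hf u' hu'.1 hu'.2
    apply div_pos (by linarith) (by positivity)
  obtain ⟨ε0, hε0pos, hε0⟩ : ∃ ε0 > 0, ∀ u' ∈ TS, ε0 ≤ δ u' := by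
    rcases TS.eq_empty_or_nonempty with he | hne
    · exact ⟨1, one_pos, by simp [he]⟩
    · obtain ⟨u', hu', hmin⟩ := Finset.exists_min_image TS δ hne
      exact ⟨δ u', hδpos u' hu', hmin⟩
  set Bad : Set ℝ := {ε | ∃ q ∈ D, ∃ q' ∈ D, q ≠ q' ∧ f q + ε * g q = f q' + ε * g q'}
    with hBad
  have hBadfin : Bad.Finite := by
    apply Set.Finite.subset (Set.Finite.image2
      (fun (q q' : Fin n → ℝ) => (f q' - f q) / (g q - g q')) hDfin hDfin)
    rintro ε ⟨q, hq, q', hq', hne, heq⟩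
    have hgne : g q - g q' ≠ 0 := by
      rw [hgsub]; exact hy q hq q' hq' hne
    have : ε = (f q' - f q) / (g q - g q') := by
      rw [eq_div_iff hgne]; linarith
    exact ⟨q, hq, q', hq', this.symm⟩
  obtain ⟨ε, hεmem⟩ := ((Set.Ioo_infinite hε0pos).diff hBadfin).nonempty
  obtain ⟨hεIoo, hεbad⟩ := hεmem
  obtain ⟨hε1, hε2⟩ := hεIoo
  set ℓ : (Fin n → ℝ) →L[ℝ] ℝ := f + ε • g with hℓdef
  have hℓ : ∀ x, ℓ x = f x + ε * g x := by intro x; simp [hℓdef]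
  have hℓS : ∀ u' ∈ S, u' ≠ v → ℓ u' < ℓ v := by
    intro u' hu' hne
    have hd := hε0 u' (by rw [hTS, Finset.mem_filter, Set.Finite.mem_toFinset]; exact ⟨hu', hne⟩)
    have hpos : (0:ℝ) < |g u'| + |g v| + 1 := by positivity
    have habs : g u' - g v ≤ |g u'| + |g v| := by
      calc g u' - g v ≤ |g u' - g v| := le_abs_self _
        _ ≤ |g u'| + |g v| := by
            rw [sub_eq_add_neg]
            exact (abs_add_le _ _).trans (by rw [abs_neg])
    have key : ε * (g u' - g v) < f v - f u' := by
      calc ε * (g u' - g v) ≤ ε * (|g u'| + |g v|) :=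
            mul_le_mul_of_nonneg_left habs hε1.le
        _ ≤ ε * (|g u'| + |g v| + 1) :=
            mul_le_mul_of_nonneg_left (by linarith) hε1.le
        _ < ε0 * (|g u'| + |g v| + 1) := mul_lt_mul_of_pos_right hε2 hpos
        _ ≤ δ u' * (|g u'| + |g v| + 1) := mul_le_mul_of_nonneg_right hd hpos.le
        _ = f v - f u' := by rw [hδ]; field_simp
    rw [mul_sub] at key
    rw [hℓ, hℓ]
    linarith
  have hPmax := strict_on_hull hSfin ℓ hvS hℓS
  obtain ⟨w, hwD, hwmax⟩ := Finset.exists_max_image hDfin.toFinset (fun q => ℓ q)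
    (by rwa [Set.Finite.toFinset_nonempty])
  rw [Set.Finite.mem_toFinset] at hwD
  have hℓD : ∀ q ∈ D, q ≠ w → ℓ q < ℓ w := by
    intro q hq hne
    rcases lt_or_eq_of_le (hwmax q (hDfin.mem_toFinset.mpr hq)) with h | h
    · exact h
    · exfalso
      apply hεbad
      refine ⟨q, hq, w, hwD, hne, ?_⟩
      rw [hℓ, hℓ] at h
      exact h
  have hQmax := strict_on_hull hDfin ℓ hwD hℓD
  have hwD2 := hwD
  obtain ⟨wb, _, hwb⟩ := hwD2
  refine ⟨ℓ, wb, ?_, hPmax, ?_⟩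
  · rw [hwb]; exact subset_convexHull ℝ _ hwD
  · rw [hwb]; exact hQmax

end CPM

set_option maxHeartbeats 2000000 in
set_option synthInstance.maxHeartbeats 400000 in
open CPM AddMonoidAlgebra in
theorem char_poly_minimal {n : ℕ}
    (P Q : Set (Fin n → ℝ))
    (hPlat : IsLatticePolytope P) (hPne : P.Nonempty)
    (hQlat : IsLatticePolytope Q) (hQne : Q.Nonempty)
    (V : Finset (Fin n → ℤ)) (hV : latC '' (V : Set (Fin n → ℤ)) = Set.extremePoints ℝ P)
    (ι : AddMonoidAlgebra ℂ (Fin n → ℤ) →ₐ[ℂ] FractionRing (MvPolynomial (Fin n) ℂ))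
    (hinj : Function.Injective ι)
    (hmon : ∀ m : Fin n → ℕ,
      ι (AddMonoidAlgebra.single (fun i => (m i : ℤ)) 1) =
        algebraMap (MvPolynomial (Fin n) ℂ) (FractionRing (MvPolynomial (Fin n) ℂ))
          (MvPolynomial.monomial (Finsupp.equivFunOnFinite.symm m) 1))
    (d : ℕ) (hd : 1 ≤ d) (c : ℕ → FractionRing (MvPolynomial (Fin n) ℂ)) (hcd : c d ≠ 0)
    (hrec : ∀ k : ℕ,
      ι (intPtTransform (((k + d : ℕ) : ℝ) • P + Q)) =
        ∑ j ∈ Finset.Icc 1 d, c j * ι (intPtTransform (((k + d - j : ℕ) : ℝ) • P + Q))) :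
    (∏ v ∈ V, (Polynomial.X - Polynomial.C (ι (AddMonoidAlgebra.single v 1)))) ∣
      (Polynomial.X ^ d - ∑ j ∈ Finset.Icc 1 d, Polynomial.C (c j) * Polynomial.X ^ (d - j)) := by

  classical
  -- the polynomial algebra embeds into the Laurent algebra compatibly with ι
  set ψ : MvPolynomial (Fin n) ℂ →ₐ[ℂ] AddMonoidAlgebra ℂ (Fin n → ℤ) :=
    MvPolynomial.aeval
      (fun i => AddMonoidAlgebra.single (fun j => ((Pi.single i 1 : Fin n → ℕ) j : ℤ)) (1:ℂ))
    with hψdef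
  have hψ : ∀ p : MvPolynomial (Fin n) ℂ,
      ι (ψ p) = algebraMap (MvPolynomial (Fin n) ℂ) (FractionRing (MvPolynomial (Fin n) ℂ)) p := by
    have hcomp : ι.comp ψ = IsScalarTower.toAlgHom ℂ (MvPolynomial (Fin n) ℂ)
        (FractionRing (MvPolynomial (Fin n) ℂ)) := by
      apply MvPolynomial.algHom_ext
      intro i
      rw [AlgHom.comp_apply, hψdef, MvPolynomial.aeval_X]
      rw [hmon (Pi.single i 1)]
      have h1 : (Finsupp.equivFunOnFinite.symm (Pi.single i 1) : Fin n →₀ ℕ)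
          = Finsupp.single i 1 := by
        rw [← Finsupp.equivFunOnFinite_single, Equiv.symm_apply_apply]
      rw [h1]
      simp [MvPolynomial.X, IsScalarTower.toAlgHom]
    intro p
    have := AlgHom.congr_fun hcomp p
    simpa using this
  -- common denominator for the c j
  have hcden : ∀ j : ℕ, ∃ ab : MvPolynomial (Fin n) ℂ × MvPolynomial (Fin n) ℂ, ab.2 ≠ 0 ∧
      c j * algebraMap _ (FractionRing (MvPolynomial (Fin n) ℂ)) ab.2 = algebraMap _ _ ab.1 := by
    intro j
    obtain ⟨⟨x, s⟩, hxs⟩ := IsLocalization.surj (nonZeroDivisors (MvPolynomial (Fin n) ℂ)) (c j)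
    exact ⟨⟨x, (s : MvPolynomial (Fin n) ℂ)⟩, nonZeroDivisors.coe_ne_zero s, hxs⟩
  choose ab hb hab using hcden
  set a : ℕ → MvPolynomial (Fin n) ℂ := fun j => (ab j).1 with hadef
  set b : ℕ → MvPolynomial (Fin n) ℂ := fun j => (ab j).2 with hbdef
  set Q0 : AddMonoidAlgebra ℂ (Fin n → ℤ) := ψ (∏ j ∈ Finset.Icc 1 d, b j) with hQ0def
  set Pj : ℕ → AddMonoidAlgebra ℂ (Fin n → ℤ) :=
    fun j => ψ (a j * ∏ j' ∈ (Finset.Icc 1 d).erase j, b j') with hPjdef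
  have hQ0ne : ι Q0 ≠ 0 := by
    rw [hQ0def, hψ]
    intro h0
    have h1 : (∏ j ∈ Finset.Icc 1 d, b j) = 0 :=
      IsFractionRing.injective (MvPolynomial (Fin n) ℂ) (FractionRing (MvPolynomial (Fin n) ℂ))
        (by rw [h0]; rw [map_zero])
    exact (Finset.prod_ne_zero_iff.mpr (fun j _ => hb j)) h1
  have hPjc : ∀ j ∈ Finset.Icc 1 d, ι (Pj j) = c j * ι Q0 := by
    intro j hj
    rw [hPjdef, hQ0def, hψ, hψ, map_mul]
    rw [← Finset.mul_prod_erase _ _ hj, map_mul, ← mul_assoc, hab j]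
  -- the integer point transforms
  have hPlat' := hPlat
  have hQlat' := hQlat
  obtain ⟨FP, hFP⟩ := hPlat'
  obtain ⟨FQ, hFQ⟩ := hQlat'
  have hPconv : Convex ℝ P := by rw [hFP]; exact convex_convexHull ℝ _
  have hPbdd : Bornology.IsBounded P := by
    rw [hFP]; exact ((FP.finite_toSet.image _).isCompact_convexHull ℝ).isBounded
  have hQbdd : Bornology.IsBounded Q := by
    rw [hFQ]; exact ((FQ.finite_toSet.image _).isCompact_convexHull ℝ).isBounded
  have hfin : ∀ m : ℕ, {z : Fin n → ℤ | latC z ∈ (m:ℝ) • P + Q}.Finite :=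
    fun m => lattice_finite ((hPbdd.smul₀ (m:ℝ)).add hQbdd)
  set s : ℕ → AddMonoidAlgebra ℂ (Fin n → ℤ) :=
    fun m => intPtTransform ((m:ℝ) • P + Q) with hsdef
  have hs : ∀ m, s m = ∑ z ∈ (hfin m).toFinset, AddMonoidAlgebra.single z 1 :=
    fun m => intPt_eq (hfin m)
  -- pulled back recursion
  have hI : ∀ k : ℕ, Q0 * s (k + d) = ∑ j ∈ Finset.Icc 1 d, Pj j * s (k + d - j) := by
    intro k
    apply hinj
    rw [map_mul, map_sum]
    have hrk := hrec k
    rw [show ι (s (k + d)) = ι (intPtTransform (((k + d : ℕ) : ℝ) • P + Q)) from rfl]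
    rw [hrk, Finset.mul_sum]
    refine Finset.sum_congr rfl fun j hj => ?_
    rw [map_mul, hPjc j hj]
    rw [show ι (s (k + d - j)) = ι (intPtTransform (((k + d - j : ℕ) : ℝ) • P + Q)) from rfl]
    ring

  -- per-vertex root fact
  have hroot : ∀ vb ∈ V, (Polynomial.X ^ d - ∑ j ∈ Finset.Icc 1 d,
      Polynomial.C (c j) * Polynomial.X ^ (d - j)).IsRoot
        (ι (AddMonoidAlgebra.single vb 1)) := by
    intro vb hvb
    have hvext : latC vb ∈ Set.extremePoints ℝ P := by
      rw [← hV]; exact Set.mem_image_of_mem _ hvb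
    have hvext' : latC vb ∈ Set.extremePoints ℝ (convexHull ℝ (latC '' (FP : Set (Fin n → ℤ)))) := by
      rwa [← hFP]
    have hQne' : (convexHull ℝ (latC '' (FQ : Set (Fin n → ℤ)))).Nonempty := by rwa [← hFQ]
    obtain ⟨ℓ, wb, hwQ0, hPmax0, hQmax0⟩ := exists_good_functional FP FQ hvext' hQne'
    rw [← hFQ] at hwQ0
    have hPmax : ∀ p ∈ P, p ≠ latC vb → ℓ p < ℓ (latC vb) := by
      intro p hp; rw [hFP] at hp; exact hPmax0 p hp
    have hQmax : ∀ q ∈ Q, q ≠ latC wb → ℓ q < ℓ (latC wb) := by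
      intro q hq; rw [hFQ] at hq; exact hQmax0 q hq
    have hvP : latC vb ∈ P := extremePoints_subset hvext
    have hPle : ∀ p ∈ P, ℓ p ≤ ℓ (latC vb) := by
      intro p hp
      rcases eq_or_ne p (latC vb) with rfl | h
      · exact le_refl _
      · exact (hPmax p hp h).le
    have hQle : ∀ q ∈ Q, ℓ q ≤ ℓ (latC wb) := by
      intro q hq
      rcases eq_or_ne q (latC wb) with rfl | h
      · exact le_refl _
      · exact (hQmax q hq h).le
    set Zc : ℕ → (Fin n → ℤ) → Prop :=
      fun m z => latC (m • vb + wb - z) ∈ (m:ℝ) • P + Q with hZc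
    have Zstep : ∀ m z, Zc m z → Zc (m+1) z := by
      intro m z hz
      obtain ⟨x, hx, q, hq, hxq⟩ := Set.mem_add.mp hz
      have harg : (m+1) • vb + wb - z = (m • vb + wb - z) + vb := by
        rw [succ_nsmul]; abel
      show latC ((m+1) • vb + wb - z) ∈ ((m+1 : ℕ):ℝ) • P + Q
      rw [harg, latC_add, ← hxq]
      have hcast : ((m+1 : ℕ):ℝ) = (m:ℝ) + 1 := by push_cast; ring
      rw [hcast, Convex.add_smul hPconv (by positivity) zero_le_one]
      have hv1 : latC vb ∈ (1:ℝ) • P := by rw [one_smul]; exact hvP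
      have hre : x + q + latC vb = (x + latC vb) + q := by abel
      rw [hre]
      exact Set.add_mem_add (Set.add_mem_add hx hv1) hq
    have Zmono : ∀ z m m', m ≤ m' → Zc m z → Zc m' z := by
      intro z m m' h hz
      induction m', h using Nat.le_induction with
      | base => exact hz
      | succ k hk ih => exact Zstep k z ih
    have Zpos : ∀ m z, Zc m z → 0 ≤ ℓ (latC z) ∧ (ℓ (latC z) = 0 → z = 0) := by
      intro m z hz
      obtain ⟨x, hx, q, hq, hxq⟩ := Set.mem_add.mp hz
      obtain ⟨p, hp, hpx⟩ := Set.mem_smul_set.mp hx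
      have hlat : latC z = (m:ℝ) • latC vb + latC wb - ((m:ℝ) • p + q) := by
        have h1 : z = (m • vb + wb) - (m • vb + wb - z) := by abel
        rw [h1, latC_sub, latC_add, latC_nsmul]
        have h2 : latC (m • vb + wb - z) = x + q := hxq.symm
        rw [h2, ← hpx]
      have hℓz : ℓ (latC z) = (m:ℝ) * (ℓ (latC vb) - ℓ p) + (ℓ (latC wb) - ℓ q) := by
        rw [hlat, map_sub, map_add, map_add, map_smul, map_smul]
        simp only [smul_eq_mul]
        ring
      have h1 : ℓ p ≤ ℓ (latC vb) := hPle p hp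
      have h2 : ℓ q ≤ ℓ (latC wb) := hQle q hq
      have hm0 : (0:ℝ) ≤ (m:ℝ) := by positivity
      have hX : 0 ≤ (m:ℝ) * (ℓ (latC vb) - ℓ p) := mul_nonneg hm0 (by linarith)
      constructor
      · rw [hℓz]; linarith
      · intro h0
        rw [hℓz] at h0
        have e1 : (m:ℝ) * (ℓ (latC vb) - ℓ p) = 0 := by linarith
        have e2 : ℓ (latC wb) = ℓ q := by linarith
        have hqw : q = latC wb := by
          by_contra hne
          exact absurd e2.symm (ne_of_lt (hQmax q hq hne))
        have hz0 : latC z = 0 := by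
          rcases mul_eq_zero.mp e1 with hm | hp0
          · rw [hlat, hqw, hm]; simp
          · have hpv : p = latC vb := by
              by_contra hne
              exact absurd (by linarith : ℓ p = ℓ (latC vb)) (ne_of_lt (hPmax p hp hne))
            rw [hlat, hqw, hpv]; abel
        exact latC_inj (show latC z = latC 0 by rw [hz0, latC_zero])
    set U : Set (Fin n → ℤ) := {z | ∃ m, Zc m z} with hU
    have core : ∀ (cc : AddMonoidAlgebra ℂ (Fin n → ℤ)) (o : Fin n → ℤ), ∃ m₀ : ℕ,
        ∀ m, m₀ ≤ m → (cc * s m).coeff (m • vb + wb + o) =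
          ∑ u ∈ cc.coeff.support, if (u - o) ∈ U then cc.coeff u else 0 := by
      intro cc o
      refine ⟨cc.coeff.support.sup (fun u => sInf {m | Zc m (u - o)}), fun m hm => ?_⟩
      rw [hs m, mul_sum_single_apply, sum_shift]
      refine Finset.sum_congr rfl fun u hu => ?_
      have harg : m • vb + wb + o - u = m • vb + wb - (u - o) := by abel
      have hcond : (m • vb + wb + o - u ∈ (hfin m).toFinset) ↔ Zc m (u - o) := by
        rw [Set.Finite.mem_toFinset, harg]
        exact Iff.rfl
      have hiff : Zc m (u - o) ↔ (u - o) ∈ U := by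
        constructor
        · exact fun h => ⟨m, h⟩
        · rintro ⟨m', hm'⟩
          have h1 : sInf {mm | Zc mm (u - o)} ≤ m :=
            le_trans (Finset.le_sup (f := fun u => sInf {m | Zc m (u - o)}) hu) hm
          have hmem : sInf {mm | Zc mm (u - o)} ∈ {mm | Zc mm (u - o)} :=
            Nat.sInf_mem ⟨m', hm'⟩
          exact Zmono _ _ _ h1 hmem
      rw [if_congr (hcond.trans hiff) rfl rfl]
    set RR : AddMonoidAlgebra ℂ (Fin n → ℤ) :=
      AddMonoidAlgebra.single (d • vb) (1:ℂ) * Q0 -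
        ∑ j ∈ Finset.Icc 1 d, AddMonoidAlgebra.single ((d - j) • vb) (1:ℂ) * Pj j with hRRdef
    have hRRcoeff : ∀ t, RR.coeff t =
        Q0.coeff (t - d • vb) - ∑ j ∈ Finset.Icc 1 d, (Pj j).coeff (t - (d - j) • vb) := by
      intro t
      rw [hRRdef, AddMonoidAlgebra.coeff_sub, Finsupp.sub_apply, AddMonoidAlgebra.coeff_sum, Finset.sum_apply']
      rw [AddMonoidAlgebra.coeff_single_mul_apply, one_mul, neg_add_eq_sub]
      congr 1
      refine Finset.sum_congr rfl fun j _ => ?_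
      rw [AddMonoidAlgebra.coeff_single_mul_apply, one_mul, neg_add_eq_sub]
    have hRR0 : RR = 0 := by
      by_contra hRne
      obtain ⟨μ, hμs, hμmax⟩ := Finset.exists_max_image RR.coeff.support (fun m => ℓ (latC m))
        (Finsupp.support_nonempty_iff.mpr (mt AddMonoidAlgebra.coeff_eq_zero.mp hRne))
      obtain ⟨m₀, hm₀⟩ := core Q0 (μ - d • vb)
      choose m₁ hm₁ using fun j => core (Pj j) (μ - (d - j) • vb)
      set k := m₀ + (Finset.Icc 1 d).sup m₁ with hk
      have hkQ : m₀ ≤ k + d := le_trans (Nat.le_add_right _ _) (Nat.le_add_right _ _)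
      have hksup : (Finset.Icc 1 d).sup m₁ ≤ k := Nat.le_add_left _ _
      clear_value k
      have hIk := congrArg
        (fun g : AddMonoidAlgebra ℂ (Fin n → ℤ) => g.coeff (k • vb + wb + μ)) (hI k)
      rw [AddMonoidAlgebra.coeff_sum, Finset.sum_apply'] at hIk
      have hL : (Q0 * s (k + d)).coeff (k • vb + wb + μ) =
          ∑ u ∈ Q0.coeff.support, if (u - (μ - d • vb)) ∈ U then Q0.coeff u else 0 := by
        have ht0 : k • vb + wb + μ = (k + d) • vb + wb + (μ - d • vb) := by
          rw [add_nsmul]; abel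
        rw [ht0]; exact hm₀ (k + d) hkQ
      have hRj : ∀ j ∈ Finset.Icc 1 d, (Pj j * s (k + d - j)).coeff (k • vb + wb + μ) =
          ∑ u ∈ (Pj j).coeff.support, if (u - (μ - (d - j) • vb)) ∈ U then (Pj j).coeff u else 0 := by
        intro j hj
        obtain ⟨hj1, hj2⟩ := Finset.mem_Icc.mp hj
        have hsub : k + d - j = k + (d - j) := by omega
        have ht0 : k • vb + wb + μ = (k + (d - j)) • vb + wb + (μ - (d - j) • vb) := by
          rw [add_nsmul]; abel
        rw [ht0, hsub]
        refine hm₁ j (k + (d - j)) ?_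
        calc m₁ j ≤ (Finset.Icc 1 d).sup m₁ := Finset.le_sup hj
          _ ≤ k := hksup
          _ ≤ k + (d - j) := Nat.le_add_right _ _
      rw [hL] at hIk
      rw [Finset.sum_congr rfl hRj] at hIk
      set B : Finset (Fin n → ℤ) := Q0.coeff.support.image (· + d • vb) ∪
          (Finset.Icc 1 d).biUnion (fun j => (Pj j).coeff.support.image (· + (d - j) • vb)) with hB
      have conv1 : ∀ (cc : AddMonoidAlgebra ℂ (Fin n → ℤ)) (σ : Fin n → ℤ),
          cc.coeff.support.image (· + σ) ⊆ B →
          (∑ u ∈ cc.coeff.support, if (u - (μ - σ)) ∈ U then cc.coeff u else 0)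
            = ∑ m ∈ B, if (m - μ) ∈ U then cc.coeff (m - σ) else 0 := by
        intro cc σ hsub
        have h1 : (∑ u ∈ cc.coeff.support, if (u - (μ - σ)) ∈ U then cc.coeff u else 0)
            = ∑ m ∈ cc.coeff.support.image (· + σ), if (m - μ) ∈ U then cc.coeff (m - σ) else 0 := by
          rw [Finset.sum_image (by intro x _ y _ h; exact add_right_cancel h)]
          refine Finset.sum_congr rfl fun u hu => ?_
          have e1 : u + σ - μ = u - (μ - σ) := by abel
          have e2 : u + σ - σ = u := by abel
          rw [e1, e2]
        rw [h1]
        apply Finset.sum_subset hsub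
        intro m hmB hnm
        have h0 : cc.coeff (m - σ) = 0 := by
          by_contra h0
          exact hnm (Finset.mem_image.mpr ⟨m - σ, Finsupp.mem_support_iff.mpr h0, by abel⟩)
        simp [h0]
      have hsubQ : Q0.coeff.support.image (· + d • vb) ⊆ B := Finset.subset_union_left
      have hsubP : ∀ j ∈ Finset.Icc 1 d, (Pj j).coeff.support.image (· + (d - j) • vb) ⊆ B := by
        intro j hj
        refine Finset.Subset.trans ?_ Finset.subset_union_right
        exact fun x hx => Finset.mem_biUnion.mpr ⟨j, hj, hx⟩
      rw [conv1 Q0 (d • vb) hsubQ] at hIk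
      rw [Finset.sum_congr rfl (fun j hj => conv1 (Pj j) ((d - j) • vb) (hsubP j hj))] at hIk
      rw [Finset.sum_comm] at hIk
      have hzero : (∑ m ∈ B, if (m - μ) ∈ U then RR.coeff m else 0) = 0 := by
        have hcomb : (∑ m ∈ B, if (m - μ) ∈ U then RR.coeff m else 0) =
            (∑ m ∈ B, if (m - μ) ∈ U then Q0.coeff (m - d • vb) else 0)
            - ∑ m ∈ B, ∑ j ∈ Finset.Icc 1 d,
                (if (m - μ) ∈ U then (Pj j).coeff (m - (d - j) • vb) else 0) := by
          rw [← Finset.sum_sub_distrib]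
          refine Finset.sum_congr rfl fun m _ => ?_
          by_cases hU' : (m - μ) ∈ U
          · simp only [if_pos hU', hRRcoeff m]
          · simp only [if_neg hU', Finset.sum_const_zero, sub_zero]
        rw [hcomb, hIk, sub_self]
      have hμB : μ ∈ B := by
        by_contra hμB
        have h1 : Q0.coeff (μ - d • vb) = 0 := by
          by_contra h0
          exact hμB (hsubQ (Finset.mem_image.mpr
            ⟨μ - d • vb, Finsupp.mem_support_iff.mpr h0, by abel⟩))
        have h2 : ∀ j ∈ Finset.Icc 1 d, (Pj j).coeff (μ - (d - j) • vb) = 0 := by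
          intro j hj
          by_contra h0
          exact hμB (hsubP j hj (Finset.mem_image.mpr
            ⟨_, Finsupp.mem_support_iff.mpr h0, by abel⟩))
        exact (Finsupp.mem_support_iff.mp hμs)
          (by rw [hRRcoeff, h1, Finset.sum_eq_zero h2, sub_zero])
      have h0U : (0 : Fin n → ℤ) ∈ U := by
        refine ⟨1, ?_⟩
        show latC (1 • vb + wb - 0) ∈ ((1:ℕ):ℝ) • P + Q
        rw [one_nsmul, sub_zero, latC_add, Nat.cast_one, one_smul]
        exact Set.add_mem_add hvP hwQ0
      have hfinal : (∑ m ∈ B, if (m - μ) ∈ U then RR.coeff m else 0) = RR.coeff μ := by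
        rw [Finset.sum_eq_single_of_mem μ hμB]
        · rw [sub_self, if_pos h0U]
        · intro m hmB hne
          by_cases hU' : (m - μ) ∈ U
          · rcases eq_or_ne (RR.coeff m) 0 with h0 | h0
            · simp [h0]
            · exfalso
              have hle := hμmax m (Finsupp.mem_support_iff.mpr h0)
              obtain ⟨m', hm'⟩ := hU'
              have hp := Zpos m' (m - μ) hm'
              have he : ℓ (latC (m - μ)) = ℓ (latC m) - ℓ (latC μ) := by
                rw [latC_sub, map_sub]
              have h00 : ℓ (latC (m - μ)) = 0 := by
                rw [he]; rw [he] at hp; linarith [hp.1]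
              exact hne (sub_eq_zero.mp (hp.2 h00))
          · simp [if_neg hU']
      exact (Finsupp.mem_support_iff.mp hμs) (by rw [← hfinal, hzero])
    -- deduce the root property
    have hpow : ∀ e : ℕ, ι (AddMonoidAlgebra.single (e • vb) (1:ℂ))
        = (ι (AddMonoidAlgebra.single vb 1))^e := by
      intro e
      rw [← map_pow]
      congr 1
      rw [AddMonoidAlgebra.single_pow, one_pow]
    have hι := congrArg ι hRR0
    rw [map_zero, hRRdef, map_sub, map_mul, map_sum] at hι
    rw [hpow d] at hι
    have hι2 : (ι (AddMonoidAlgebra.single vb 1))^d * ι Q0 -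
        ∑ j ∈ Finset.Icc 1 d, (c j * (ι (AddMonoidAlgebra.single vb 1))^(d-j)) * ι Q0 = 0 := by
      rw [← hι]
      congr 1
      refine Finset.sum_congr rfl fun j hj => ?_
      rw [map_mul, hpow (d - j), hPjc j hj]
      ring
    have hι3 : ((ι (AddMonoidAlgebra.single vb 1))^d -
        ∑ j ∈ Finset.Icc 1 d, c j * (ι (AddMonoidAlgebra.single vb 1))^(d-j)) * ι Q0 = 0 := by
      rw [sub_mul, Finset.sum_mul]
      exact hι2
    have hval := (mul_eq_zero.mp hι3).resolve_right hQ0ne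
    rw [Polynomial.IsRoot, Polynomial.eval_sub, Polynomial.eval_pow, Polynomial.eval_X,
      Polynomial.eval_finset_sum]
    rw [← hval]
    congr 1
    refine Finset.sum_congr rfl fun j _ => ?_
    rw [Polynomial.eval_mul, Polynomial.eval_C, Polynomial.eval_pow, Polynomial.eval_X]
  -- assemble the divisibility
  have hcop : (V : Set (Fin n → ℤ)).Pairwise
      ((Function.onFun IsCoprime fun v => Polynomial.X - Polynomial.C (ι (AddMonoidAlgebra.single v 1)))) := by
    intro vb hvb vb' hvb' hne
    simp only [Function.onFun]
    apply Polynomial.isCoprime_X_sub_C_of_isUnit_sub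
    apply isUnit_iff_ne_zero.mpr
    apply sub_ne_zero.mpr
    intro heq
    apply hne
    have h1 := hinj heq
    exact (AddMonoidAlgebra.single_left_inj one_ne_zero).mp h1
  have hdvd : ∀ vb ∈ V, (Polynomial.X - Polynomial.C (ι (AddMonoidAlgebra.single vb 1))) ∣
      (Polynomial.X ^ d - ∑ j ∈ Finset.Icc 1 d, Polynomial.C (c j) * Polynomial.X ^ (d - j)) := by
    intro vb hvb
    rw [Polynomial.dvd_iff_isRoot]
    exact hroot vb hvb
  exact Finset.prod_dvd_of_coprime hcop hdvd
end
end

section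
/- Let P ⊆ ℝ^n be a nonempty polytope with vertex set V(P) = {v_1, …, v_r} (r distinct vertices). Then for every integer k ≥ 0 the identity of indicator functions 𝟙_{(k+r)P} = Σ_{∅≠I⊆[r]} (−1)^{1+|I|} · 𝟙_{(k+r−|I|)P + Σ_{i∈I} v_i} holds pointwise on ℝ^n (as real-valued functions), where (k+r−|I|)P + Σ_{i∈I} v_i denotes the translate of the dilate (k+r−|I|)P by the vector Σ_{i∈I} v_i. -/
open scoped BigOperators Pointwise

noncomputable section

open Filter Topology Set

/-- Jump-sum functional: sum of (value minus right limit) over all points. -/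
noncomputable def jumpSum (F : ℝ → ℝ) : ℝ :=
  ∑ᶠ t : ℝ, (F t - limUnder (𝓝[>] t) F)

/-- Euler characteristic functional, built by slicing off the last coordinate. -/
noncomputable def eulerChar : (N : ℕ) → ((Fin N → ℝ) → ℝ) → ℝ
  | 0, f => f Fin.elim0
  | N + 1, f => jumpSum (fun t => eulerChar N (fun y => f (Fin.snoc y t)))

lemma tendsto_indicator_Icc (a b t : ℝ) :
    Filter.Tendsto (fun u => (Set.Icc a b).indicator (fun _ => (1:ℝ)) u) (𝓝[>] t)
      (𝓝 ((Set.Ico a b).indicator (fun _ => (1:ℝ)) t)) := by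
  have h : ∀ᶠ u in 𝓝[>] t, (Set.Icc a b).indicator (fun _ => (1:ℝ)) u
      = (Set.Ico a b).indicator (fun _ => (1:ℝ)) t := by
    rcases lt_or_ge t a with hta | hat
    · filter_upwards [Ioo_mem_nhdsGT_of_mem (Set.left_mem_Ico.2 hta)] with u hu
      rw [Set.indicator_of_notMem
          (fun hm => absurd (Set.mem_Icc.1 hm).1 (not_le.2 (Set.mem_Ioo.1 hu).2)),
        Set.indicator_of_notMem (fun hm => absurd (Set.mem_Ico.1 hm).1 (not_le.2 hta))]
    · rcases lt_or_ge t b with htb | hbt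
      · filter_upwards [Ioo_mem_nhdsGT_of_mem (Set.left_mem_Ico.2 htb)] with u hu
        rw [Set.indicator_of_mem (Set.mem_Icc.2
            ⟨le_trans hat (le_of_lt (Set.mem_Ioo.1 hu).1), le_of_lt (Set.mem_Ioo.1 hu).2⟩),
          Set.indicator_of_mem (Set.mem_Ico.2 ⟨hat, htb⟩)]
      · filter_upwards [Ioo_mem_nhdsGT_of_mem (Set.left_mem_Ico.2 (lt_add_one t))] with u hu
        rw [Set.indicator_of_notMem (fun hm => absurd (Set.mem_Icc.1 hm).2
            (not_le.2 (lt_of_le_of_lt hbt (Set.mem_Ioo.1 hu).1))),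
          Set.indicator_of_notMem (fun hm => absurd (Set.mem_Ico.1 hm).2 (not_lt.2 hbt))]
  exact Filter.Tendsto.congr' (Filter.EventuallyEq.symm h) tendsto_const_nhds

lemma jumpSum_sum {ι : Type*} [DecidableEq ι] (s : Finset ι) (c : ι → ℝ) (a b : ι → ℝ)
    (hab : ∀ i ∈ s, a i ≤ b i) :
    jumpSum (fun t => ∑ i ∈ s, c i * (Set.Icc (a i) (b i)).indicator (fun _ => (1:ℝ)) t)
      = ∑ i ∈ s, c i := by
  have hlim : ∀ t : ℝ, limUnder (𝓝[>] t)
      (fun u => ∑ i ∈ s, c i * (Set.Icc (a i) (b i)).indicator (fun _ => (1:ℝ)) u)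
      = ∑ i ∈ s, c i * (Set.Ico (a i) (b i)).indicator (fun _ => (1:ℝ)) t := by
    intro t
    refine Filter.Tendsto.limUnder_eq ?_
    exact tendsto_finset_sum _ (fun i _ => (tendsto_indicator_Icc (a i) (b i) t).const_mul (c i))
  have hjump : ∀ t : ℝ,
      ((∑ i ∈ s, c i * (Set.Icc (a i) (b i)).indicator (fun _ => (1:ℝ)) t)
        - limUnder (𝓝[>] t)
          (fun u => ∑ i ∈ s, c i * (Set.Icc (a i) (b i)).indicator (fun _ => (1:ℝ)) u))
      = ∑ i ∈ s, c i * ({b i} : Set ℝ).indicator (fun _ => (1:ℝ)) t := by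
    intro t
    rw [hlim t, ← Finset.sum_sub_distrib]
    refine Finset.sum_congr rfl (fun i hi => ?_)
    rw [← mul_sub]
    congr 1
    by_cases hbi : t = b i
    · subst hbi
      rw [Set.indicator_of_mem (Set.mem_Icc.2 ⟨hab i hi, le_refl _⟩),
        Set.indicator_of_notMem (fun hm => absurd (Set.mem_Ico.1 hm).2 (lt_irrefl _)),
        Set.indicator_of_mem (Set.mem_singleton _)]
      norm_num
    · rw [Set.indicator_of_notMem (by simpa using hbi : t ∉ ({b i} : Set ℝ)), sub_eq_zero]
      by_cases hmem : t ∈ Set.Icc (a i) (b i)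
      · rw [Set.indicator_of_mem hmem, Set.indicator_of_mem (Set.mem_Ico.2
          ⟨(Set.mem_Icc.1 hmem).1, lt_of_le_of_ne (Set.mem_Icc.1 hmem).2 hbi⟩)]
      · rw [Set.indicator_of_notMem hmem,
          Set.indicator_of_notMem (fun hm => hmem (Set.mem_Icc.2
            ⟨(Set.mem_Ico.1 hm).1, le_of_lt (Set.mem_Ico.1 hm).2⟩))]
  unfold jumpSum
  have hsupp : (Function.support fun t =>
      ∑ i ∈ s, c i * ({b i} : Set ℝ).indicator (fun _ => (1:ℝ)) t) ⊆ ↑(s.image b) := by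
    intro t ht
    simp only [Function.mem_support] at ht
    by_contra hmem
    apply ht
    refine Finset.sum_eq_zero (fun i hi => ?_)
    rw [Set.indicator_of_notMem, mul_zero]
    intro hm
    exact hmem (by simpa using ⟨i, hi, (Set.mem_singleton_iff.1 hm).symm⟩)
  calc ∑ᶠ t : ℝ, ((∑ i ∈ s, c i * (Set.Icc (a i) (b i)).indicator (fun _ => (1:ℝ)) t)
        - limUnder (𝓝[>] t)
          (fun u => ∑ i ∈ s, c i * (Set.Icc (a i) (b i)).indicator (fun _ => (1:ℝ)) u))
      = ∑ᶠ t : ℝ, ∑ i ∈ s, c i * ({b i} : Set ℝ).indicator (fun _ => (1:ℝ)) t := by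
        exact finsum_congr hjump
    _ = ∑ t ∈ s.image b, ∑ i ∈ s, c i * ({b i} : Set ℝ).indicator (fun _ => (1:ℝ)) t :=
        finsum_eq_sum_of_support_subset _ hsupp
    _ = ∑ i ∈ s, ∑ t ∈ s.image b, c i * ({b i} : Set ℝ).indicator (fun _ => (1:ℝ)) t :=
        Finset.sum_comm
    _ = ∑ i ∈ s, c i := by
        refine Finset.sum_congr rfl (fun i hi => ?_)
        rw [Finset.sum_eq_single (b i)]
        · rw [Set.indicator_of_mem (Set.mem_singleton _), mul_one]
        · intro t _ hne
          rw [Set.indicator_of_notMem (by simpa using hne), mul_zero]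
        · intro hni
          exact absurd (Finset.mem_image_of_mem b hi) hni

lemma eulerChar_zero : ∀ N, eulerChar N (fun _ => (0:ℝ)) = 0 := by
  intro N
  induction N with
  | zero => rfl
  | succ N ih =>
    show jumpSum (fun t => eulerChar N (fun _ => (0:ℝ))) = 0
    have h1 : (fun t : ℝ => eulerChar N (fun _ => (0:ℝ))) = fun _ : ℝ => (0:ℝ) := by
      funext t; exact ih
    rw [h1]
    unfold jumpSum
    have h2 : ∀ t : ℝ, ((fun _ : ℝ => (0:ℝ)) t - limUnder (𝓝[>] t) (fun _ : ℝ => (0:ℝ))) = 0 := by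
      intro t
      rw [Filter.Tendsto.limUnder_eq (tendsto_const_nhds : Filter.Tendsto _ (𝓝[>] t) (𝓝 (0:ℝ)))]
      simp
    rw [finsum_congr h2, finsum_zero]

lemma eulerChar_sum {ι : Type*} [DecidableEq ι] :
    ∀ (N : ℕ) (s : Finset ι) (K : ι → Set (Fin N → ℝ)) (c : ι → ℝ),
    (∀ i ∈ s, (K i).Nonempty ∧ Convex ℝ (K i) ∧ IsCompact (K i)) →
    eulerChar N (fun z => ∑ i ∈ s, c i * (K i).indicator (fun _ => (1:ℝ)) z) = ∑ i ∈ s, c i := by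
  intro N
  induction N with
  | zero =>
    intro s K c hK
    show (∑ i ∈ s, c i * (K i).indicator (fun _ => (1:ℝ)) Fin.elim0) = ∑ i ∈ s, c i
    refine Finset.sum_congr rfl fun i hi => ?_
    obtain ⟨p, hp⟩ := (hK i hi).1
    have hep : Fin.elim0 = p := Subsingleton.elim _ _
    rw [hep, Set.indicator_of_mem hp, mul_one]
  | succ N ih =>
    intro s K c hK
    classical
    set π : (Fin (N+1) → ℝ) → ℝ := fun z => z (Fin.last N) with hπ
    have hπc : Continuous π := continuous_apply _
    set S : ι → ℝ → Set (Fin N → ℝ) := fun i t => {y | Fin.snoc y t ∈ K i} with hS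
    set a : ι → ℝ := fun i => sInf (π '' K i) with ha
    set b : ι → ℝ := fun i => sSup (π '' K i) with hb
    have himg : ∀ i ∈ s, π '' K i = Set.Icc (a i) (b i) := by
      intro i hi
      obtain ⟨hne, hconv, hcomp⟩ := hK i hi
      have hicomp : IsCompact (π '' K i) := hcomp.image hπc
      have hiconv : Convex ℝ (π '' K i) := hconv.linear_image (LinearMap.proj (Fin.last N))
      have hineA : (π '' K i).Nonempty := hne.image π
      apply Set.Subset.antisymm
      · intro u hu
        exact Set.mem_Icc.2 ⟨csInf_le hicomp.bddBelow hu, le_csSup hicomp.bddAbove hu⟩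
      · exact hiconv.ordConnected.out (hicomp.sInf_mem hineA) (hicomp.sSup_mem hineA)
    have hab : ∀ i ∈ s, a i ≤ b i := by
      intro i hi
      have hne : (Set.Icc (a i) (b i)).Nonempty := (himg i hi) ▸ ((hK i hi).1.image π)
      exact Set.nonempty_Icc.1 hne
    have hSne : ∀ i ∈ s, ∀ t, (S i t).Nonempty ↔ t ∈ Set.Icc (a i) (b i) := by
      intro i hi t
      rw [← himg i hi]
      constructor
      · rintro ⟨y, hy⟩
        exact ⟨Fin.snoc y t, hy, by simp [hπ]⟩
      · rintro ⟨z, hz, rfl⟩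
        refine ⟨Fin.init z, ?_⟩
        show Fin.snoc (Fin.init z) (π z) ∈ K i
        rw [hπ]
        simpa [Fin.snoc_init_self] using hz
    have hSconv : ∀ i ∈ s, ∀ t, Convex ℝ (S i t) := by
      intro i hi t p hp q hq α β hα hβ hαβ
      have key : (Fin.snoc (α • p + β • q) t : Fin (N+1) → ℝ)
          = α • (Fin.snoc p t : Fin (N+1) → ℝ) + β • (Fin.snoc q t : Fin (N+1) → ℝ) := by
        funext j
        refine Fin.lastCases ?_ (fun j0 => ?_) j
        · simp only [Fin.snoc_last, Pi.add_apply, Pi.smul_apply, smul_eq_mul]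
          rw [← add_mul, hαβ, one_mul]
        · simp only [Fin.snoc_castSucc, Pi.add_apply, Pi.smul_apply, smul_eq_mul]
      show Fin.snoc (α • p + β • q) t ∈ K i
      rw [key]
      exact (hK i hi).2.1 hp hq hα hβ hαβ
    have hScomp : ∀ i ∈ s, ∀ t, IsCompact (S i t) := by
      intro i hi t
      have hslice : S i t = Fin.init '' (K i ∩ π ⁻¹' {t}) := by
        ext y
        constructor
        · intro hy
          refine ⟨Fin.snoc y t, ⟨hy, by simp [hπ]⟩, by simp⟩
        · rintro ⟨z, ⟨hz, hzt⟩, rfl⟩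
          have hzt' : z (Fin.last N) = t := hzt
          show Fin.snoc (Fin.init z) t ∈ K i
          rw [← hzt', Fin.snoc_init_self]
          exact hz
      rw [hslice]
      have hcl : IsClosed (π ⁻¹' ({t} : Set ℝ)) := isClosed_singleton.preimage hπc
      exact ((hK i hi).2.2.inter_right hcl).image (continuous_pi fun j => continuous_apply _)
    show jumpSum (fun t => eulerChar N
        (fun y => ∑ i ∈ s, c i * (K i).indicator (fun _ => (1:ℝ)) (Fin.snoc y t))) = ∑ i ∈ s, c i
    have hF : ∀ t : ℝ, eulerChar N
        (fun y => ∑ i ∈ s, c i * (K i).indicator (fun _ => (1:ℝ)) (Fin.snoc y t))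
        = ∑ i ∈ s, c i * (Set.Icc (a i) (b i)).indicator (fun _ => (1:ℝ)) t := by
      intro t
      have hind : ∀ (i : ι) (y : Fin N → ℝ),
          (K i).indicator (fun _ => (1:ℝ)) (Fin.snoc y t) = (S i t).indicator (fun _ => (1:ℝ)) y := by
        intro i y
        by_cases h : Fin.snoc y t ∈ K i
        · rw [Set.indicator_of_mem h, Set.indicator_of_mem (show y ∈ S i t from h)]
        · rw [Set.indicator_of_notMem h, Set.indicator_of_notMem (show y ∉ S i t from h)]
      have hfun : (fun y => ∑ i ∈ s, c i * (K i).indicator (fun _ => (1:ℝ)) (Fin.snoc y t))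
          = fun y => ∑ i ∈ s.filter (fun i => (S i t).Nonempty),
              c i * (S i t).indicator (fun _ => (1:ℝ)) y := by
        funext y
        rw [Finset.sum_filter]
        refine Finset.sum_congr rfl fun i hi => ?_
        by_cases hne : (S i t).Nonempty
        · rw [if_pos hne, hind]
        · rw [if_neg hne, hind, Set.indicator_of_notMem (fun hm => hne ⟨y, hm⟩), mul_zero]
      rw [hfun, ih (s.filter (fun i => (S i t).Nonempty)) (fun i => S i t) c ?_]
      · rw [Finset.sum_filter]
        refine Finset.sum_congr rfl fun i hi => ?_
        by_cases hne : (S i t).Nonempty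
        · rw [if_pos hne, Set.indicator_of_mem ((hSne i hi t).1 hne), mul_one]
        · rw [if_neg hne, Set.indicator_of_notMem (fun hm => hne ((hSne i hi t).2 hm)), mul_zero]
      · intro i hi
        rw [Finset.mem_filter] at hi
        exact ⟨hi.2, hSconv i hi.1 t, hScomp i hi.1 t⟩
    rw [funext hF]
    exact jumpSum_sum s c a b hab

lemma euler_consistency {ι : Type*} [DecidableEq ι] {N : ℕ} (s : Finset ι)
    (K : ι → Set (Fin N → ℝ)) (c : ι → ℝ)
    (hK : ∀ i ∈ s, (K i).Nonempty ∧ Convex ℝ (K i) ∧ IsCompact (K i))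
    (hzero : ∀ z, ∑ i ∈ s, c i * (K i).indicator (fun _ => (1:ℝ)) z = 0) :
    ∑ i ∈ s, c i = 0 := by
  rw [← eulerChar_sum N s K c hK]
  rw [show (fun z => ∑ i ∈ s, c i * (K i).indicator (fun _ => (1:ℝ)) z) = fun _ => (0:ℝ) from
    funext hzero]
  exact eulerChar_zero N


theorem indicator_recursion {n r : ℕ}
    (P : Set (Fin n → ℝ)) (hP : IsPolytope P) (hPne : P.Nonempty)
    (v : Fin r → (Fin n → ℝ)) (hv : Function.Injective v)
    (hvert : Set.extremePoints ℝ P = Set.range v)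
    (k : ℕ) (x : Fin n → ℝ) :
    Set.indicator (((k + r : ℕ) : ℝ) • P) (fun _ => (1 : ℝ)) x =
      ∑ I ∈ (Finset.univ : Finset (Fin r)).powerset.filter (fun I => I.Nonempty),
        (-1 : ℝ) ^ (1 + I.card) *
          Set.indicator (((k + r - I.card : ℕ) : ℝ) • P + {∑ i ∈ I, v i})
            (fun _ => (1 : ℝ)) x := by
  classical
  obtain ⟨F, hF⟩ := hP
  have hPconv : Convex ℝ P := hF ▸ convex_convexHull ℝ _
  have hPcomp : IsCompact P := hF ▸ F.finite_toSet.isCompact_convexHull (𝕜 := ℝ)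
  have hPeq : P = convexHull ℝ (Set.range v) := by
    have h1 := closure_convexHull_extremePoints hPcomp hPconv
    rw [hvert] at h1
    rw [← h1, IsClosed.closure_eq ((Set.finite_range v).isClosed_convexHull (𝕜 := ℝ))]
  have hr : 1 ≤ r := by
    rcases Nat.eq_zero_or_pos r with h0 | h
    · exfalso
      subst h0
      rw [Set.range_eq_empty v, convexHull_empty] at hPeq
      obtain ⟨p, hp⟩ := hPne
      rw [hPeq] at hp
      exact hp
    · exact h
  have hhull : ∀ w : Fin n → ℝ, w ∈ convexHull ℝ (Set.range v) ↔
      ∃ t : Fin r → ℝ, (∀ i, 0 ≤ t i) ∧ ∑ i, t i = 1 ∧ ∑ i, t i • v i = w := by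
    intro w
    constructor
    · intro hw
      obtain ⟨ι', hFT, wt, z, hw0, hw1, hz, hxeq⟩ := mem_convexHull_iff_exists_fintype.mp hw
      letI := hFT
      choose g hg using hz
      refine ⟨fun j => ∑ i ∈ Finset.univ.filter (fun i => g i = j), wt i,
        fun j => Finset.sum_nonneg (fun i _ => hw0 i), ?_, ?_⟩
      · rw [Finset.sum_fiberwise_of_maps_to (fun i _ => Finset.mem_univ (g i)) wt]
        exact hw1
      · calc ∑ j, (∑ i ∈ Finset.univ.filter (fun i => g i = j), wt i) • v j
            = ∑ j, ∑ i ∈ Finset.univ.filter (fun i => g i = j), wt i • v j := by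
              refine Finset.sum_congr rfl fun j _ => ?_
              rw [Finset.sum_smul]
          _ = ∑ j, ∑ i ∈ Finset.univ.filter (fun i => g i = j), wt i • v (g i) := by
              refine Finset.sum_congr rfl fun j _ => Finset.sum_congr rfl fun i hi => ?_
              rw [(Finset.mem_filter.1 hi).2]
          _ = ∑ i, wt i • v (g i) :=
              Finset.sum_fiberwise_of_maps_to (fun i _ => Finset.mem_univ (g i)) _
          _ = ∑ i, wt i • z i := Finset.sum_congr rfl fun i _ => by rw [hg i]
          _ = w := hxeq
    · rintro ⟨t, ht0, ht1, htw⟩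
      exact mem_convexHull_of_exists_fintype t v ht0 ht1 (fun i => Set.mem_range_self i) htw
  have hmem : ∀ (c : ℕ) (w : Fin n → ℝ), w ∈ ((c : ℝ)) • P ↔
      ∃ μ : Fin r → ℝ, (∀ i, 0 ≤ μ i) ∧ ∑ i, μ i = (c : ℝ) ∧ ∑ i, μ i • v i = w := by
    intro c w
    rcases Nat.eq_zero_or_pos c with hc0 | hcpos
    · subst hc0
      simp only [Nat.cast_zero]
      rw [Set.zero_smul_set hPne]
      constructor
      · intro hw
        have hw0 : w = 0 := by simpa using hw
        exact ⟨fun _ => 0, fun _ => le_refl 0, by simp, by simp [hw0]⟩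
      · rintro ⟨μ, hμ0, hμs, hμv⟩
        have hz : ∀ i ∈ Finset.univ, μ i = 0 :=
          (Finset.sum_eq_zero_iff_of_nonneg (fun i _ => hμ0 i)).1 hμs
        have hw0 : w = 0 := by
          rw [← hμv]
          exact Finset.sum_eq_zero fun i hi => by rw [hz i hi, zero_smul]
        simp [hw0]
    · have hcr : (0:ℝ) < c := by exact_mod_cast hcpos
      rw [Set.mem_smul_set_iff_inv_smul_mem₀ (ne_of_gt hcr), hPeq, hhull]
      constructor
      · rintro ⟨t, ht0, ht1, htw⟩
        refine ⟨fun i => (c:ℝ) * t i, fun i => mul_nonneg (le_of_lt hcr) (ht0 i), ?_, ?_⟩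
        · rw [← Finset.mul_sum, ht1, mul_one]
        · have hsw : ∀ i ∈ Finset.univ, ((c:ℝ) * t i) • v i = (c:ℝ) • (t i • v i) :=
            fun i _ => (smul_smul _ _ _).symm
          rw [Finset.sum_congr rfl hsw, ← Finset.smul_sum, htw,
            smul_inv_smul₀ (ne_of_gt hcr)]
      · rintro ⟨μ, hμ0, hμs, hμv⟩
        refine ⟨fun i => (c:ℝ)⁻¹ * μ i,
          fun i => mul_nonneg (inv_nonneg.2 (le_of_lt hcr)) (hμ0 i), ?_, ?_⟩
        · rw [← Finset.mul_sum, hμs, inv_mul_cancel₀ (ne_of_gt hcr)]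
        · have hsw : ∀ i ∈ Finset.univ, ((c:ℝ)⁻¹ * μ i) • v i = (c:ℝ)⁻¹ • (μ i • v i) :=
            fun i _ => (smul_smul _ _ _).symm
          rw [Finset.sum_congr rfl hsw, ← Finset.smul_sum, hμv]
  set Lam : Finset (Fin r) → Set (Fin r → ℝ) := fun I =>
    {ν | (∀ i, 0 ≤ ν i) ∧ (∑ i, ν i = ((k:ℝ) + r)) ∧ (∑ i, ν i • v i = x) ∧ ∀ i ∈ I, 1 ≤ ν i}
    with hLamdef
  have hcard : ∀ I : Finset (Fin r), I.card ≤ k + r := fun I =>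
    le_trans (le_trans (Finset.card_le_univ I) (by simp)) (Nat.le_add_left r k)
  have hcast : ∀ I : Finset (Fin r), ((k + r - I.card : ℕ) : ℝ) = ((k:ℝ) + r) - I.card := by
    intro I
    rw [Nat.cast_sub (hcard I)]
    push_cast
    ring
  have hsumone : ∀ I : Finset (Fin r), ∑ i, (if i ∈ I then (1:ℝ) else 0) = I.card := by
    intro I
    rw [Finset.sum_ite_mem, Finset.univ_inter, Finset.sum_const, nsmul_eq_mul, mul_one]
  have hsumv : ∀ I : Finset (Fin r),
      ∑ i, (if i ∈ I then (1:ℝ) else 0) • v i = ∑ i ∈ I, v i := by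
    intro I
    rw [show (fun i => (if i ∈ I then (1:ℝ) else 0) • v i)
        = fun i => (if i ∈ I then v i else 0) from funext fun i => by
          by_cases hi : i ∈ I <;> simp [hi]]
    rw [Finset.sum_ite_mem, Finset.univ_inter]
  have hLam : ∀ I : Finset (Fin r),
      (x ∈ (((k + r - I.card : ℕ) : ℝ)) • P + {∑ i ∈ I, v i}) ↔ (Lam I).Nonempty := by
    intro I
    rw [Set.add_singleton]
    constructor
    · rintro ⟨w, hw, hwx⟩
      obtain ⟨μ, hμ0, hμs, hμv⟩ := (hmem _ w).1 hw
      refine ⟨fun i => μ i + if i ∈ I then 1 else 0,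
        fun i => add_nonneg (hμ0 i) (by split <;> norm_num), ?_, ?_, fun i hi => ?_⟩
      · show ∑ i : Fin r, (μ i + if i ∈ I then (1:ℝ) else 0) = (k:ℝ) + r
        rw [Finset.sum_add_distrib, hμs, hcast I, hsumone I]
        ring
      · calc ∑ i, (μ i + if i ∈ I then (1:ℝ) else 0) • v i
            = ∑ i, (μ i • v i + (if i ∈ I then (1:ℝ) else 0) • v i) :=
              Finset.sum_congr rfl fun i _ => add_smul _ _ _
          _ = (∑ i, μ i • v i) + ∑ i, (if i ∈ I then (1:ℝ) else 0) • v i :=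
              Finset.sum_add_distrib
          _ = w + ∑ i ∈ I, v i := by rw [hμv, hsumv I]
          _ = x := hwx
      · show (1:ℝ) ≤ μ i + if i ∈ I then 1 else 0
        rw [if_pos hi]
        linarith [hμ0 i]
    · rintro ⟨ν, hν0, hνs, hνv, hνI⟩
      refine ⟨x - ∑ i ∈ I, v i, ?_, by show x - ∑ i ∈ I, v i + ∑ i ∈ I, v i = x; abel⟩
      apply (hmem _ _).2
      refine ⟨fun i => ν i - if i ∈ I then 1 else 0, fun i => ?_, ?_, ?_⟩
      · show (0:ℝ) ≤ ν i - if i ∈ I then 1 else 0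
        by_cases hi : i ∈ I
        · rw [if_pos hi]
          linarith [hνI i hi]
        · rw [if_neg hi]
          simpa using hν0 i
      · show ∑ i : Fin r, (ν i - if i ∈ I then (1:ℝ) else 0) = ((k + r - I.card : ℕ) : ℝ)
        rw [Finset.sum_sub_distrib, hνs, hsumone I, hcast I]
      · calc ∑ i, (ν i - if i ∈ I then (1:ℝ) else 0) • v i
            = ∑ i, (ν i • v i - (if i ∈ I then (1:ℝ) else 0) • v i) :=
              Finset.sum_congr rfl fun i _ => sub_smul _ _ _
          _ = (∑ i, ν i • v i) - ∑ i, (if i ∈ I then (1:ℝ) else 0) • v i :=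
              Finset.sum_sub_distrib _ _
          _ = x - ∑ i ∈ I, v i := by rw [hνv, hsumv I]
  have hLamconv : ∀ I : Finset (Fin r), Convex ℝ (Lam I) := by
    intro I ν₁ h1 ν₂ h2 α β hα hβ hαβ
    obtain ⟨h10, h1s, h1v, h1I⟩ := h1
    obtain ⟨h20, h2s, h2v, h2I⟩ := h2
    have happ : ∀ i, (α • ν₁ + β • ν₂) i = α * ν₁ i + β * ν₂ i := fun i => rfl
    refine ⟨fun i => ?_, ?_, ?_, fun i hi => ?_⟩
    · rw [happ i]
      exact add_nonneg (mul_nonneg hα (h10 i)) (mul_nonneg hβ (h20 i))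
    · rw [Finset.sum_congr rfl (fun i _ => happ i), Finset.sum_add_distrib,
        ← Finset.mul_sum, ← Finset.mul_sum, h1s, h2s, ← add_mul, hαβ, one_mul]
    · calc ∑ i, (α • ν₁ + β • ν₂) i • v i
          = ∑ i, (α • (ν₁ i • v i) + β • (ν₂ i • v i)) := by
            refine Finset.sum_congr rfl fun i _ => ?_
            rw [happ i, add_smul, smul_smul, smul_smul]
        _ = α • (∑ i, ν₁ i • v i) + β • (∑ i, ν₂ i • v i) := by
            rw [Finset.sum_add_distrib, Finset.smul_sum, Finset.smul_sum]
        _ = x := by rw [h1v, h2v, ← add_smul, hαβ, one_smul]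
    · rw [happ i]
      calc (1:ℝ) = α * 1 + β * 1 := by rw [mul_one, mul_one, hαβ]
        _ ≤ α * ν₁ i + β * ν₂ i :=
          add_le_add (mul_le_mul_of_nonneg_left (h1I i hi) hα)
            (mul_le_mul_of_nonneg_left (h2I i hi) hβ)
  have hLamcomp : ∀ I : Finset (Fin r), IsCompact (Lam I) := by
    intro I
    have hclosed : IsClosed (Lam I) := by
      have hdec : Lam I = (⋂ i, {ν : Fin r → ℝ | 0 ≤ ν i}) ∩
          ({ν : Fin r → ℝ | ∑ i, ν i = ((k:ℝ) + r)} ∩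
            ({ν : Fin r → ℝ | ∑ i, ν i • v i = x} ∩ ⋂ i ∈ I, {ν : Fin r → ℝ | 1 ≤ ν i})) := by
        ext ν
        simp only [hLamdef, Set.mem_setOf_eq, Set.mem_inter_iff, Set.mem_iInter]
      rw [hdec]
      refine IsClosed.inter (isClosed_iInter fun i => isClosed_le continuous_const
        (continuous_apply i)) (IsClosed.inter ?_ (IsClosed.inter ?_ ?_))
      · exact isClosed_eq (continuous_finset_sum _ fun i _ => continuous_apply i) continuous_const
      · exact isClosed_eq (continuous_finset_sum _ fun i _ =>
          (continuous_apply i).smul continuous_const) continuous_const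
      · exact isClosed_biInter fun i _ => isClosed_le continuous_const (continuous_apply i)
    have hsub : Lam I ⊆ Set.Icc (fun _ => (0:ℝ)) (fun _ => ((k:ℝ) + r)) := by
      rintro ν ⟨h0, hs, _, _⟩
      refine Set.mem_Icc.2 ⟨fun i => h0 i, fun i => ?_⟩
      calc ν i ≤ ∑ j, ν j := Finset.single_le_sum (fun j _ => h0 j) (Finset.mem_univ i)
        _ = (k:ℝ) + r := hs
    exact IsCompact.of_isClosed_subset isCompact_Icc hclosed hsub
  by_cases hx0 : (Lam ∅).Nonempty
  · have hL : x ∈ ((k + r : ℕ) : ℝ) • P := by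
      obtain ⟨ν, hν0, hνs, hνv, _⟩ := hx0
      exact (hmem (k + r) x).2 ⟨ν, hν0, by push_cast; exact hνs, hνv⟩
    rw [Set.indicator_of_mem hL]
    set D : Finset (Finset (Fin r)) := Finset.univ.filter (fun I => (Lam I).Nonempty) with hD
    have hemptyD : (∅ : Finset (Fin r)) ∈ D := Finset.mem_filter.2 ⟨Finset.mem_univ _, hx0⟩
    have hkey : ∑ I ∈ D, (-1:ℝ) ^ I.card = 0 := by
      refine euler_consistency D Lam (fun I => (-1:ℝ) ^ I.card) ?_ ?_
      · intro I hI
        exact ⟨(Finset.mem_filter.1 hI).2, hLamconv I, hLamcomp I⟩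
      · intro ν
        by_cases hν : ν ∈ Lam ∅
        · obtain ⟨hν0, hνs, hνv, _⟩ := hν
          set Sν : Finset (Fin r) := Finset.univ.filter (fun i => 1 ≤ ν i) with hSν
          have hmemLam : ∀ I : Finset (Fin r), ν ∈ Lam I ↔ I ⊆ Sν := by
            intro I
            constructor
            · intro h i hi
              exact Finset.mem_filter.2 ⟨Finset.mem_univ i, h.2.2.2 i hi⟩
            · intro h
              exact ⟨hν0, hνs, hνv, fun i hi => (Finset.mem_filter.1 (h hi)).2⟩
          have hDS : D.filter (fun I => ν ∈ Lam I) = Sν.powerset := by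
            ext I
            simp only [Finset.mem_filter, Finset.mem_powerset, hD, Finset.mem_univ, true_and]
            constructor
            · rintro ⟨_, h⟩
              exact (hmemLam I).1 h
            · intro h
              exact ⟨⟨ν, (hmemLam I).2 h⟩, (hmemLam I).2 h⟩
          have hSne : Sν.Nonempty := by
            by_contra hse
            rw [Finset.not_nonempty_iff_eq_empty] at hse
            have hlt : ∀ i : Fin r, ν i < 1 := by
              intro i
              by_contra hge
              have : i ∈ Sν := Finset.mem_filter.2 ⟨Finset.mem_univ i, not_lt.1 hge⟩
              rw [hse] at this
              exact Finset.notMem_empty i this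
            have hne : (Finset.univ : Finset (Fin r)).Nonempty :=
              ⟨⟨0, hr⟩, Finset.mem_univ _⟩
            have := Finset.sum_lt_sum_of_nonempty hne (fun i _ => hlt i)
            rw [hνs, Finset.sum_const, nsmul_eq_mul, mul_one, Finset.card_univ,
              Fintype.card_fin] at this
            have hk0 : (0:ℝ) ≤ k := Nat.cast_nonneg k
            linarith
          calc ∑ I ∈ D, (-1:ℝ) ^ I.card * (Lam I).indicator (fun _ => (1:ℝ)) ν
              = ∑ I ∈ D.filter (fun I => ν ∈ Lam I), (-1:ℝ) ^ I.card := by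
                conv_rhs => rw [Finset.sum_filter]
                refine Finset.sum_congr rfl fun I _ => ?_
                by_cases h : ν ∈ Lam I
                · rw [if_pos h, Set.indicator_of_mem h, mul_one]
                · rw [if_neg h, Set.indicator_of_notMem h, mul_zero]
            _ = ∑ I ∈ Sν.powerset, (-1:ℝ) ^ I.card := by rw [hDS]
            _ = 0 := by
                have hz := Finset.sum_powerset_neg_one_pow_card_of_nonempty hSne
                calc ∑ I ∈ Sν.powerset, (-1:ℝ) ^ I.card
                    = ((∑ I ∈ Sν.powerset, (-1:ℤ) ^ I.card : ℤ) : ℝ) := by push_cast; rfl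
                  _ = 0 := by rw [hz]; norm_num
        · refine Finset.sum_eq_zero fun I hI => ?_
          have hnm : ν ∉ Lam I := by
            intro hm
            exact hν ⟨hm.1, hm.2.1, hm.2.2.1, fun i hi => absurd hi (Finset.notMem_empty i)⟩
          rw [Set.indicator_of_notMem hnm, mul_zero]
    have h1 : ∑ I ∈ D.erase ∅, (-1:ℝ) ^ I.card = -1 := by
      have h2 := hkey
      rw [← Finset.add_sum_erase D _ hemptyD] at h2
      simp only [Finset.card_empty, pow_zero] at h2
      linarith
    symm
    calc ∑ I ∈ (Finset.univ : Finset (Fin r)).powerset.filter (fun I => I.Nonempty),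
          (-1:ℝ) ^ (1 + I.card) *
            Set.indicator (((k + r - I.card : ℕ) : ℝ) • P + {∑ i ∈ I, v i}) (fun _ => (1:ℝ)) x
        = ∑ I ∈ D.erase ∅, (-1:ℝ) ^ (1 + I.card) *
            Set.indicator (((k + r - I.card : ℕ) : ℝ) • P + {∑ i ∈ I, v i}) (fun _ => (1:ℝ)) x
          := by
          refine (Finset.sum_subset ?_ ?_).symm
          · intro I hI
            obtain ⟨hne, hID⟩ := Finset.mem_erase.1 hI
            exact Finset.mem_filter.2 ⟨Finset.mem_powerset.2 (Finset.subset_univ I),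
              Finset.nonempty_iff_ne_empty.2 hne⟩
          · intro I hI hnI
            have hne : I ≠ ∅ :=
              Finset.nonempty_iff_ne_empty.1 (Finset.mem_filter.1 hI).2
            have hnD : I ∉ D := fun hd => hnI (Finset.mem_erase.2 ⟨hne, hd⟩)
            have hnLam : ¬ (Lam I).Nonempty := fun h =>
              hnD (Finset.mem_filter.2 ⟨Finset.mem_univ _, h⟩)
            have hnx : x ∉ (((k + r - I.card : ℕ) : ℝ)) • P + {∑ i ∈ I, v i} := fun h =>
              hnLam ((hLam I).1 h)
            rw [Set.indicator_of_notMem hnx, mul_zero]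
      _ = ∑ I ∈ D.erase ∅, (-1:ℝ) ^ (1 + I.card) := by
          refine Finset.sum_congr rfl fun I hI => ?_
          have hID : I ∈ D := (Finset.mem_erase.1 hI).2
          have hLamne : (Lam I).Nonempty := (Finset.mem_filter.1 hID).2
          rw [Set.indicator_of_mem ((hLam I).2 hLamne), mul_one]
      _ = ∑ I ∈ D.erase ∅, (-1:ℝ) * (-1:ℝ) ^ I.card := by
          refine Finset.sum_congr rfl fun I _ => ?_
          rw [pow_add, pow_one]
      _ = (-1:ℝ) * ∑ I ∈ D.erase ∅, (-1:ℝ) ^ I.card := by rw [Finset.mul_sum]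
      _ = 1 := by rw [h1]; ring
  · have hL : x ∉ ((k + r : ℕ) : ℝ) • P := by
      intro hxk
      obtain ⟨μ, h0, hs, hvv⟩ := (hmem (k + r) x).1 hxk
      exact hx0 ⟨μ, h0, by push_cast at hs ⊢; exact hs, hvv,
        fun i hi => absurd hi (Finset.notMem_empty i)⟩
    rw [Set.indicator_of_notMem hL]
    symm
    refine Finset.sum_eq_zero fun I hI => ?_
    have hnx : x ∉ (((k + r - I.card : ℕ) : ℝ)) • P + {∑ i ∈ I, v i} := by
      intro hxI
      obtain ⟨ν, hν0, hνs, hνv, _⟩ := (hLam I).1 hxI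
      exact hx0 ⟨ν, hν0, hνs, hνv, fun i hi => absurd hi (Finset.notMem_empty i)⟩
    rw [Set.indicator_of_notMem hnx, mul_zero]

end
end

section
/- Let Q ⊆ ℝ^n be a nonempty polytope, P ⊆ ℝ^n a nonempty lattice polytope with vertex set V(P) = {v_1, …, v_r}, and f : ℝ^n → ℝ^l a linear map with f(ℤ^n) ⊆ ℤ^l. For a polytope S ⊆ ℝ^n define f̄(σ_S) = Σ_{m ∈ S ∩ ℤ^n} x^{f(m)} ∈ ℂ[ℤ^l] (a sum with multiplicity: the coefficient of a monomial x^u is the number of lattice points m of S with f(m) = u). Then for every integer k ≥ 0: Σ_{I⊆[r]} (−1)^{|I|} · x^{f(Σ_{i∈I} v_i)} · f̄(σ_{(k+r−|I|)P+Q}) = 0 in ℂ[ℤ^l]; that is, the sequence {f̄(σ_{kP+Q})}_{k≥0} satisfies a linear recursion with characteristic polynomial ∏_{v∈V(P)} (X − x^{f(v)}). -/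
open scoped BigOperators Pointwise Classical

noncomputable section

lemma seg_lemma {ι : Type*} {Λ : Set (ι → ℝ)} (hΛ : Convex ℝ Λ) {I : Finset ι} {a : ι}
    {x y : ι → ℝ} (hx : x ∈ Λ) (hy : y ∈ Λ) (hxI : ∀ i ∈ I, 1 ≤ x i) (hyI : ∀ i ∈ I, 1 ≤ y i)
    (hxa : x a ≤ 1) (hya : 1 ≤ y a) :
    ∃ z ∈ Λ, (∀ i ∈ I, 1 ≤ z i) ∧ z a = 1 := by
  rcases eq_or_lt_of_le hxa with h1 | h1
  · exact ⟨x, hx, hxI, h1⟩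
  · have hd : 0 < y a - x a := by linarith
    set θ : ℝ := (1 - x a) / (y a - x a) with hθ
    have hθ0 : 0 ≤ θ := div_nonneg (by linarith) hd.le
    have hθ1 : θ ≤ 1 := (div_le_one hd).2 (by linarith)
    have hmem : (1 - θ) • x + θ • y ∈ Λ := hΛ hx hy (by linarith) hθ0 (by ring)
    have hmul : θ * (y a - x a) = 1 - x a := div_mul_cancel₀ _ hd.ne'
    refine ⟨(1 - θ) • x + θ • y, hmem, ?_, ?_⟩
    · intro i hi
      have h1 := hxI i hi
      have h2 := hyI i hi
      simp only [Pi.add_apply, Pi.smul_apply, smul_eq_mul]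
      nlinarith
    · simp only [Pi.add_apply, Pi.smul_apply, smul_eq_mul]
      nlinarith

lemma keyA {ι : Type*} [DecidableEq ι] (s : Finset ι) :
    ∀ (Λ : Set (ι → ℝ)), Convex ℝ Λ →
    (∀ μ ∈ Λ, (s.card : ℝ) ≤ ∑ i ∈ s, μ i) →
    ∑ I ∈ s.powerset, (-1 : ℂ) ^ I.card *
        (if (∃ μ ∈ Λ, ∀ i ∈ I, (1:ℝ) ≤ μ i) then 1 else 0)
      = if s = ∅ ∧ Λ.Nonempty then 1 else 0 := by
  induction s using Finset.induction_on with
  | empty =>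
      intro Λ _ _
      simp [Set.Nonempty]
  | @insert a s ha ih =>
      intro Λ hconv hsum
      have hins : insert a s ≠ ∅ := by simp
      rw [Finset.sum_powerset_insert ha]
      set Λ'' : Set (ι → ℝ) := Λ ∩ {μ | μ a ≤ 1} with hΛ''
      set Λs : Set (ι → ℝ) := Λ ∩ {μ | μ a = 1} with hΛs
      have hconv'' : Convex ℝ Λ'' :=
        hconv.inter (convex_halfSpace_le (⟨fun _ _ => rfl, fun _ _ => rfl⟩ :
          IsLinearMap ℝ fun μ : ι → ℝ => μ a) 1)
      have hconvs : Convex ℝ Λs :=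
        hconv.inter (convex_hyperplane (⟨fun _ _ => rfl, fun _ _ => rfl⟩ :
          IsLinearMap ℝ fun μ : ι → ℝ => μ a) 1)
      have hsum'' : ∀ μ ∈ Λ'', (s.card : ℝ) ≤ ∑ i ∈ s, μ i := by
        rintro μ ⟨hμ, hμa⟩
        have := hsum μ hμ
        rw [Finset.sum_insert ha, Finset.card_insert_of_notMem ha] at this
        push_cast at this
        simp only [Set.mem_setOf_eq] at hμa
        linarith
      have hsums : ∀ μ ∈ Λs, (s.card : ℝ) ≤ ∑ i ∈ s, μ i := by
        rintro μ ⟨hμ, hμa⟩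
        exact hsum'' μ ⟨hμ, le_of_eq hμa⟩
      have key : ∀ I ∈ s.powerset,
          (-1 : ℂ) ^ I.card * (if (∃ μ ∈ Λ, ∀ i ∈ I, (1:ℝ) ≤ μ i) then 1 else 0) +
          (-1 : ℂ) ^ (insert a I).card *
            (if (∃ μ ∈ Λ, ∀ i ∈ insert a I, (1:ℝ) ≤ μ i) then 1 else 0)
          = (-1 : ℂ) ^ I.card * (if (∃ μ ∈ Λ'', ∀ i ∈ I, (1:ℝ) ≤ μ i) then 1 else 0)
            - (-1 : ℂ) ^ I.card * (if (∃ μ ∈ Λs, ∀ i ∈ I, (1:ℝ) ≤ μ i) then 1 else 0) := by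
        intro I hI
        have haI : a ∉ I := fun h => ha (Finset.mem_powerset.1 hI h)
        rw [Finset.card_insert_of_notMem haI, pow_succ]
        have hzero : (∃ μ ∈ Λ, ∀ i ∈ insert a I, (1:ℝ) ≤ μ i) ↔
            (∃ μ ∈ Λ, (∀ i ∈ I, (1:ℝ) ≤ μ i) ∧ 1 ≤ μ a) := by
          constructor
          · rintro ⟨μ, hμ, h⟩
            exact ⟨μ, hμ, fun i hi => h i (Finset.mem_insert_of_mem hi),
              h a (Finset.mem_insert_self a I)⟩
          · rintro ⟨μ, hμ, h1, h2⟩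
            refine ⟨μ, hμ, fun i hi => ?_⟩
            rcases Finset.mem_insert.1 hi with rfl | hi
            · exact h2
            · exact h1 i hi
        by_cases hA : ∃ μ ∈ Λ, ∀ i ∈ I, (1:ℝ) ≤ μ i
        · by_cases hB : ∃ μ ∈ Λ, (∀ i ∈ I, (1:ℝ) ≤ μ i) ∧ 1 ≤ μ a
          · by_cases hC : ∃ μ ∈ Λ'', ∀ i ∈ I, (1:ℝ) ≤ μ i
            · have hD : ∃ μ ∈ Λs, ∀ i ∈ I, (1:ℝ) ≤ μ i := by
                obtain ⟨x, ⟨hx, hxa⟩, hxI⟩ := hC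
                obtain ⟨y, hy, hyI, hya⟩ := hB
                obtain ⟨z, hz, hzI, hza⟩ := seg_lemma hconv hx hy hxI hyI hxa hya
                exact ⟨z, ⟨hz, hza⟩, hzI⟩
              rw [if_pos hA, if_pos (hzero.2 hB), if_pos hC, if_pos hD]
              ring
            · have hD : ¬ ∃ μ ∈ Λs, ∀ i ∈ I, (1:ℝ) ≤ μ i := by
                rintro ⟨μ, ⟨hμ, hμa⟩, hμI⟩
                exact hC ⟨μ, ⟨hμ, le_of_eq hμa⟩, hμI⟩
              rw [if_pos hA, if_pos (hzero.2 hB), if_neg hC, if_neg hD]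
              ring
          · have hC : ∃ μ ∈ Λ'', ∀ i ∈ I, (1:ℝ) ≤ μ i := by
              obtain ⟨μ, hμ, hμI⟩ := hA
              refine ⟨μ, ⟨hμ, ?_⟩, hμI⟩
              by_contra h
              exact hB ⟨μ, hμ, hμI, le_of_not_ge h⟩
            have hD : ¬ ∃ μ ∈ Λs, ∀ i ∈ I, (1:ℝ) ≤ μ i := by
              rintro ⟨μ, ⟨hμ, hμa⟩, hμI⟩
              exact hB ⟨μ, hμ, hμI, le_of_eq hμa.symm⟩
            rw [if_pos hA, if_neg (fun h => hB (hzero.1 h)), if_pos hC, if_neg hD]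
            ring
        · have hB : ¬ ∃ μ ∈ Λ, ∀ i ∈ insert a I, (1:ℝ) ≤ μ i := by
            rintro h
            obtain ⟨μ, hμ, h1, _⟩ := hzero.1 h
            exact hA ⟨μ, hμ, h1⟩
          have hC : ¬ ∃ μ ∈ Λ'', ∀ i ∈ I, (1:ℝ) ≤ μ i := by
            rintro ⟨μ, ⟨hμ, _⟩, hμI⟩
            exact hA ⟨μ, hμ, hμI⟩
          have hD : ¬ ∃ μ ∈ Λs, ∀ i ∈ I, (1:ℝ) ≤ μ i := by
            rintro ⟨μ, ⟨hμ, _⟩, hμI⟩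
            exact hA ⟨μ, hμ, hμI⟩
          rw [if_neg hA, if_neg hB, if_neg hC, if_neg hD]
          ring
      rw [← Finset.sum_add_distrib, Finset.sum_congr rfl key, Finset.sum_sub_distrib,
        ih Λ'' hconv'' hsum'', ih Λs hconvs hsums]
      by_cases hs : s = ∅
      · subst hs
        have heq : Λ'' = Λs := by
          ext μ
          constructor
          · rintro ⟨hμ, hμa⟩
            have := hsum μ hμ
            simp at this hμa
            exact ⟨hμ, le_antisymm hμa this⟩
          · rintro ⟨hμ, hμa⟩
            exact ⟨hμ, le_of_eq hμa⟩
        rw [heq]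
        simp [hins]
      · simp [hs, hins]

lemma convexHull_range_eq' {n r : ℕ} (w : Fin r → (Fin n → ℝ)) :
    convexHull ℝ (Set.range w) =
      {x | ∃ μ : Fin r → ℝ, (∀ i, 0 ≤ μ i) ∧ ∑ i, μ i = 1 ∧ ∑ i, μ i • w i = x} := by
  apply Set.Subset.antisymm
  · apply convexHull_min
    · rintro x ⟨j, rfl⟩
      refine ⟨fun i => if i = j then 1 else 0, fun i => by positivity, by simp, by simp⟩
    · rintro x ⟨μx, hμx0, hμx1, hμxw⟩ y ⟨μy, hμy0, hμy1, hμyw⟩ p q hp hq hpq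
      refine ⟨fun i => p * μx i + q * μy i,
        fun i => add_nonneg (mul_nonneg hp (hμx0 i)) (mul_nonneg hq (hμy0 i)), ?_, ?_⟩
      · rw [Finset.sum_add_distrib, ← Finset.mul_sum, ← Finset.mul_sum, hμx1, hμy1]
        simpa using hpq
      · simp only [add_smul, mul_smul, Finset.sum_add_distrib, ← Finset.smul_sum, hμxw, hμyw]
  · rintro x ⟨μ, hμ0, hμ1, hμw⟩
    rw [← hμw, ← Finset.centerMass_eq_of_sum_1 _ _ hμ1]
    exact Finset.centerMass_mem_convexHull _ (fun i _ => hμ0 i) (by rw [hμ1]; norm_num)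
      (fun i _ => Set.mem_range_self i)

lemma mem_dilate_add {n r : ℕ} (w : Fin r → (Fin n → ℝ)) (hr : 0 < r)
    (Q : Set (Fin n → ℝ)) {t : ℝ} (ht : 0 ≤ t) (x : Fin n → ℝ) :
    x ∈ t • convexHull ℝ (Set.range w) + Q ↔
      ∃ μ : Fin r → ℝ, (∀ i, 0 ≤ μ i) ∧ ∑ i, μ i = t ∧
        ∃ q ∈ Q, x = (∑ i, μ i • w i) + q := by
  rw [Set.mem_add]
  constructor
  · rintro ⟨aa, haa, q, hq, rfl⟩
    rw [Set.mem_smul_set] at haa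
    obtain ⟨p, hp, rfl⟩ := haa
    rw [convexHull_range_eq'] at hp
    obtain ⟨μ, hμ0, hμ1, hμw⟩ := hp
    refine ⟨fun i => t * μ i, fun i => mul_nonneg ht (hμ0 i), ?_, q, hq, ?_⟩
    · rw [← Finset.mul_sum, hμ1, mul_one]
    · rw [← hμw]
      simp [Finset.smul_sum, mul_smul]
  · rintro ⟨μ, hμ0, hμ1, q, hq, rfl⟩
    rcases ht.eq_or_lt with rfl | htpos
    · have hμz : ∀ i, μ i = 0 := by
        intro i
        have := (Finset.sum_eq_zero_iff_of_nonneg (fun i _ => hμ0 i)).1 hμ1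
        exact this i (Finset.mem_univ i)
      refine ⟨0, ?_, q, hq, ?_⟩
      · rw [Set.mem_smul_set]
        refine ⟨w ⟨0, hr⟩, ?_, by simp⟩
        rw [convexHull_range_eq']
        exact ⟨fun i => if i = ⟨0, hr⟩ then 1 else 0, fun i => by positivity, by simp, by simp⟩
      · simp [hμz]
    · refine ⟨∑ i, μ i • w i, ?_, q, hq, rfl⟩
      rw [Set.mem_smul_set]
      refine ⟨∑ i, (t⁻¹ * μ i) • w i, ?_, ?_⟩
      · rw [convexHull_range_eq']
        refine ⟨fun i => t⁻¹ * μ i, fun i => mul_nonneg (by positivity) (hμ0 i), ?_, rfl⟩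
        rw [← Finset.mul_sum, hμ1, inv_mul_cancel₀ htpos.ne']
      · rw [Finset.smul_sum]
        congr 1
        ext i
        rw [smul_smul, mul_inv_cancel_left₀ htpos.ne']

lemma finite_latC_preimage {n : ℕ} {K : Set (Fin n → ℝ)} (hK : Bornology.IsBounded K) :
    {m : Fin n → ℤ | latC m ∈ K}.Finite := by
  obtain ⟨R, hR⟩ := hK.subset_closedBall 0
  have hpi : (Set.pi (Set.univ : Set (Fin n)) fun _ => Set.Icc (-⌈R⌉) ⌈R⌉).Finite :=
    Set.Finite.pi fun _ => Set.finite_Icc _ _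
  apply hpi.subset
  intro m hm
  have h1 : latC m ∈ Metric.closedBall 0 R := hR hm
  rw [mem_closedBall_zero_iff] at h1
  intro i _
  have h2 : |latC m i| ≤ R := by
    calc |latC m i| = ‖latC m i‖ := (Real.norm_eq_abs _).symm
    _ ≤ ‖latC m‖ := norm_le_pi_norm _ i
    _ ≤ R := h1
  have h3 : |(m i : ℝ)| ≤ (⌈R⌉ : ℝ) := le_trans h2 (Int.le_ceil R)
  rw [abs_le] at h3
  constructor
  · exact_mod_cast h3.1
  · exact_mod_cast h3.2

set_option maxHeartbeats 2000000 in
theorem projected_transform_recursion {n l r : ℕ}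
    (P Q : Set (Fin n → ℝ))
    (hQpoly : IsPolytope Q) (hQne : Q.Nonempty)
    (hPlat : IsLatticePolytope P) (hPne : P.Nonempty)
    (v : Fin r → (Fin n → ℤ)) (hv : Function.Injective v)
    (hvert : Set.extremePoints ℝ P = Set.range (fun i => latC (v i)))
    (f : (Fin n → ℝ) →ₗ[ℝ] (Fin l → ℝ))
    (g : (Fin n → ℤ) → (Fin l → ℤ))
    (hg : ∀ m : Fin n → ℤ, latC (g m) = f (latC m))
    (k : ℕ) :
    ∑ I ∈ (Finset.univ : Finset (Fin r)).powerset,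
      AddMonoidAlgebra.single (g (∑ i ∈ I, v i)) ((-1 : ℂ) ^ I.card) *
        (∑ᶠ m ∈ {m : Fin n → ℤ | latC m ∈ ((k + r - I.card : ℕ) : ℝ) • P + Q},
          AddMonoidAlgebra.single (g m) (1 : ℂ)) = 0 := by
  classical
  set w : Fin r → (Fin n → ℝ) := fun i => latC (v i) with hwdef
  -- basic facts about latC and g
  have hlatadd : ∀ a b : Fin n → ℤ, latC (a + b) = latC a + latC b := by
    intro a b; funext i; simp [latC]
  have hlatinjn : Function.Injective (latC (n := n)) := by
    intro a b h; funext i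
    have := congrFun h i
    simp only [latC] at this
    exact_mod_cast this
  have hlatinjl : Function.Injective (latC (n := l)) := by
    intro a b h; funext i
    have := congrFun h i
    simp only [latC] at this
    exact_mod_cast this
  have hgadd : ∀ a b : Fin n → ℤ, g (a + b) = g a + g b := by
    intro a b
    apply hlatinjl
    rw [hg, hlatadd, map_add, ← hg, ← hg]
    funext i; simp [latC]
  set latHom : (Fin n → ℤ) →+ (Fin n → ℝ) := AddMonoidHom.mk' latC hlatadd with hlatHom
  have hlatsum : ∀ (I : Finset (Fin r)), latC (∑ i ∈ I, v i) = ∑ i ∈ I, w i := by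
    intro I
    exact map_sum latHom v I
  have hlatsub : ∀ a b : Fin n → ℤ, latC (a - b) = latC a - latC b := by
    intro a b; exact map_sub latHom a b
  -- P is the hull of the w's
  obtain ⟨F, hF⟩ := hPlat
  have hPcomp : IsCompact P := by
    rw [hF]; exact Set.Finite.isCompact_convexHull ℝ (F.finite_toSet.image _)
  have hPconv : Convex ℝ P := by rw [hF]; exact convex_convexHull ℝ _
  have hw : convexHull ℝ (Set.range w) = P := by
    have h1 := closure_convexHull_extremePoints hPcomp hPconv
    rw [hvert] at h1
    have hclosed : IsClosed (convexHull ℝ (Set.range w)) :=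
      (Set.Finite.isCompact_convexHull ℝ (Set.finite_range w)).isClosed
    rw [hclosed.closure_eq] at h1
    exact h1
  have hr : 0 < r := by
    have hne : (Set.range w).Nonempty := by
      rw [← @convexHull_nonempty_iff ℝ, hw]; exact hPne
    obtain ⟨_, i, _⟩ := hne
    exact i.pos
  -- Q facts
  obtain ⟨FQ, hFQ⟩ := hQpoly
  have hQcomp : IsCompact Q := by
    rw [hFQ]; exact Set.Finite.isCompact_convexHull ℝ FQ.finite_toSet
  have hQconv : Convex ℝ Q := by rw [hFQ]; exact convex_convexHull ℝ _
  -- finiteness of lattice points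
  have hfin : ∀ I : Finset (Fin r),
      {m : Fin n → ℤ | latC m ∈ ((k + r - I.card : ℕ) : ℝ) • P + Q}.Finite := by
    intro I
    apply finite_latC_preimage
    have hcomp : IsCompact (((k + r - I.card : ℕ) : ℝ) • P + Q) := by
      apply IsCompact.add _ hQcomp
      rw [← Set.image_smul]
      exact hPcomp.image (continuous_const_smul _)
    exact hcomp.isBounded
  set T : Finset (Fin r) → Finset (Fin n → ℤ) := fun I => (hfin I).toFinset with hT
  set T' : Finset (Fin r) → Finset (Fin n → ℤ) :=
    fun I => (T I).image (fun m => (∑ i ∈ I, v i) + m) with hT'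
  set G : Finset (Fin n → ℤ) := (Finset.univ : Finset (Fin r)).powerset.biUnion T' with hG
  have hTG : ∀ I ∈ (Finset.univ : Finset (Fin r)).powerset, T' I ⊆ G :=
    fun I hI => Finset.subset_biUnion_of_mem T' hI
  -- rewrite each summand
  have step1 : ∀ I ∈ (Finset.univ : Finset (Fin r)).powerset,
      AddMonoidAlgebra.single (g (∑ i ∈ I, v i)) ((-1 : ℂ) ^ I.card) *
        (∑ᶠ m ∈ {m : Fin n → ℤ | latC m ∈ ((k + r - I.card : ℕ) : ℝ) • P + Q},
          AddMonoidAlgebra.single (g m) (1 : ℂ))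
      = ∑ m' ∈ G, (if m' ∈ T' I then
          AddMonoidAlgebra.single (g m') ((-1 : ℂ) ^ I.card) else 0) := by
    intro I hI
    rw [finsum_mem_eq_finite_toFinset_sum _ (hfin I), Finset.mul_sum]
    have e1 : ∀ m ∈ T I,
        AddMonoidAlgebra.single (g (∑ i ∈ I, v i)) ((-1 : ℂ) ^ I.card) *
          AddMonoidAlgebra.single (g m) (1 : ℂ)
        = AddMonoidAlgebra.single (g ((∑ i ∈ I, v i) + m)) ((-1 : ℂ) ^ I.card) := by
      intro m _
      rw [AddMonoidAlgebra.single_mul_single, mul_one, hgadd]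
    rw [Finset.sum_congr rfl e1]
    have e2 : ∑ m ∈ T I,
        AddMonoidAlgebra.single (g ((∑ i ∈ I, v i) + m)) ((-1 : ℂ) ^ I.card)
        = ∑ m' ∈ T' I, AddMonoidAlgebra.single (g m') ((-1 : ℂ) ^ I.card) := by
      rw [hT']
      rw [Finset.sum_image (fun a _ b _ h => by exact add_left_cancel h)]
    rw [e2, Finset.sum_ite_mem, Finset.inter_eq_right.2 (hTG I hI)]
  rw [Finset.sum_congr rfl step1, Finset.sum_comm]
  -- group terms for each lattice point m'
  apply Finset.sum_eq_zero
  intro m' _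
  -- push single out of the sum
  have e3 : ∀ I ∈ (Finset.univ : Finset (Fin r)).powerset,
      (if m' ∈ T' I then AddMonoidAlgebra.single (g m') ((-1 : ℂ) ^ I.card) else 0)
      = AddMonoidAlgebra.single (g m') (if m' ∈ T' I then ((-1 : ℂ) ^ I.card) else 0) := by
    intro I _
    split <;> simp
  rw [Finset.sum_congr rfl e3]
  set sHom : ℂ →+ AddMonoidAlgebra ℂ (Fin l → ℤ) :=
    { toFun := fun c => AddMonoidAlgebra.single (g m') c,
      map_zero' := AddMonoidAlgebra.single_zero _,
      map_add' := fun a b => AddMonoidAlgebra.single_add _ a b } with hsHom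
  -- the coefficient is zero
  set x : Fin n → ℝ := latC m' with hx
  set Λ : Set (Fin r → ℝ) := {μ : Fin r → ℝ | (∀ i, 0 ≤ μ i) ∧ ∑ i, μ i = ((k : ℝ) + r) ∧
    ∃ q ∈ Q, x = (∑ i, μ i • w i) + q} with hΛ
  have hΛconv : Convex ℝ Λ := by
    rintro μ ⟨hμ0, hμ1, q, hq, hμx⟩ ν ⟨hν0, hν1, q', hq', hνx⟩ p p' hp hp' hpp
    refine ⟨?_, ?_, p • q + p' • q', hQconv hq hq' hp hp' hpp, ?_⟩
    · intro i
      simp only [Pi.add_apply, Pi.smul_apply, smul_eq_mul]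
      exact add_nonneg (mul_nonneg hp (hμ0 i)) (mul_nonneg hp' (hν0 i))
    · simp only [Pi.add_apply, Pi.smul_apply, smul_eq_mul]
      rw [Finset.sum_add_distrib, ← Finset.mul_sum, ← Finset.mul_sum, hμ1, hν1]
      nlinarith
    · have hkey : ∀ (c : ℝ) (μ : Fin r → ℝ) (q : Fin n → ℝ),
          c • ((∑ i, μ i • w i) + q) = (∑ i, (c * μ i) • w i) + c • q := by
        intro c μ q
        rw [smul_add, Finset.smul_sum]
        simp only [smul_smul]
      have e1 : p • x = (∑ i, (p * μ i) • w i) + p • q := by rw [hμx, hkey]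
      have e2 : p' • x = (∑ i, (p' * ν i) • w i) + p' • q' := by rw [hνx, hkey]
      calc x = (p + p') • x := by rw [hpp, one_smul]
      _ = p • x + p' • x := add_smul p p' x
      _ = ((∑ i, (p * μ i) • w i) + p • q) + ((∑ i, (p' * ν i) • w i) + p' • q') := by
          rw [e1, e2]
      _ = (∑ i, ((p • μ + p' • ν) i) • w i) + (p • q + p' • q') := by
          simp only [Pi.add_apply, Pi.smul_apply, smul_eq_mul, add_smul,
            Finset.sum_add_distrib]
          abel
  have hΛsum : ∀ μ ∈ Λ, (((Finset.univ : Finset (Fin r)).card : ℝ)) ≤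
      ∑ i ∈ Finset.univ, μ i := by
    rintro μ ⟨_, hμ1, _⟩
    rw [hμ1, Finset.card_univ, Fintype.card_fin]
    have : (0:ℝ) ≤ (k:ℝ) := Nat.cast_nonneg k
    linarith
  have hcond : ∀ I ∈ (Finset.univ : Finset (Fin r)).powerset,
      (m' ∈ T' I) ↔ (∃ μ ∈ Λ, ∀ i ∈ I, (1:ℝ) ≤ μ i) := by
    intro I hI
    have hcard : I.card ≤ k + r := by
      have h1 : I.card ≤ r := by
        have := Finset.card_le_card (Finset.mem_powerset.1 hI)
        simpa using this
      omega
    have hcast : ((k + r - I.card : ℕ) : ℝ) = ((k : ℝ) + r) - I.card := by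
      push_cast [Nat.cast_sub hcard]
      ring
    have hmem : (m' ∈ T' I) ↔ latC (m' - ∑ i ∈ I, v i) ∈
        ((k + r - I.card : ℕ) : ℝ) • P + Q := by
      rw [hT', Finset.mem_image]
      constructor
      · rintro ⟨m, hm, rfl⟩
        have : (∑ i ∈ I, v i) + m - ∑ i ∈ I, v i = m := by abel
        rw [this]
        rw [hT, Set.Finite.mem_toFinset] at hm
        exact hm
      · intro h
        refine ⟨m' - ∑ i ∈ I, v i, ?_, by abel⟩
        rw [hT, Set.Finite.mem_toFinset]
        exact h
    rw [hmem, ← hw, mem_dilate_add w hr Q (by positivity) _]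
    rw [hlatsub, hlatsum, ← hx]
    constructor
    · rintro ⟨μ', hμ'0, hμ'1, q, hq, hxe⟩
      refine ⟨fun i => μ' i + (if i ∈ I then 1 else 0), ⟨?_, ?_, q, hq, ?_⟩, ?_⟩
      · intro i
        have := hμ'0 i
        dsimp only
        split <;> linarith
      · dsimp only
        rw [Finset.sum_add_distrib, hμ'1, Finset.sum_ite_mem, Finset.univ_inter,
          Finset.sum_const, nsmul_eq_mul, mul_one, hcast]
        ring
      · have hsplit : ∑ i, (μ' i + (if i ∈ I then (1:ℝ) else 0)) • w i
            = (∑ i, μ' i • w i) + ∑ i ∈ I, w i := by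
          simp only [add_smul, Finset.sum_add_distrib, ite_smul, zero_smul, one_smul]
          rw [Finset.sum_ite_mem, Finset.univ_inter]
        dsimp only
        rw [hsplit]
        have := hxe
        rw [sub_eq_iff_eq_add] at this
        rw [this]
        abel
      · intro i hi
        have := hμ'0 i
        dsimp only
        simp only [hi, if_pos]
        linarith
    · rintro ⟨μ, ⟨hμ0, hμ1, q, hq, hxe⟩, hμI⟩
      refine ⟨fun i => μ i - (if i ∈ I then 1 else 0), ?_, ?_, q, hq, ?_⟩
      · intro i
        dsimp only
        by_cases hi : i ∈ I
        · simp only [hi, if_pos]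
          have := hμI i hi
          linarith
        · simp only [hi, if_neg, not_false_iff]
          have := hμ0 i
          simp
          linarith
      · dsimp only
        rw [Finset.sum_sub_distrib, hμ1, Finset.sum_ite_mem, Finset.univ_inter,
          Finset.sum_const, nsmul_eq_mul, mul_one, hcast]
      · have hsplit : ∑ i, (μ i - (if i ∈ I then (1:ℝ) else 0)) • w i
            = (∑ i, μ i • w i) - ∑ i ∈ I, w i := by
          simp only [sub_smul, Finset.sum_sub_distrib, ite_smul, zero_smul, one_smul]
          rw [Finset.sum_ite_mem, Finset.univ_inter]
        dsimp only
        rw [hsplit, hxe]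
        abel
  have hcoef : ∑ I ∈ (Finset.univ : Finset (Fin r)).powerset,
      (if m' ∈ T' I then ((-1 : ℂ) ^ I.card) else 0) = 0 := by
    have h0 := keyA (Finset.univ : Finset (Fin r)) Λ hΛconv hΛsum
    have huniv : (Finset.univ : Finset (Fin r)) ≠ ∅ := by
      have : Nonempty (Fin r) := ⟨⟨0, hr⟩⟩
      exact Finset.univ_nonempty.ne_empty
    rw [if_neg (by simp [huniv])] at h0
    calc ∑ I ∈ (Finset.univ : Finset (Fin r)).powerset,
        (if m' ∈ T' I then ((-1 : ℂ) ^ I.card) else 0)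
        = ∑ I ∈ (Finset.univ : Finset (Fin r)).powerset, (-1 : ℂ) ^ I.card *
            (if (∃ μ ∈ Λ, ∀ i ∈ I, (1:ℝ) ≤ μ i) then 1 else 0) := by
          apply Finset.sum_congr rfl
          intro I hI
          rw [if_congr (hcond I hI) rfl rfl, mul_ite, mul_one, mul_zero]
      _ = 0 := h0
  have e4 : ∑ I ∈ (Finset.univ : Finset (Fin r)).powerset,
      AddMonoidAlgebra.single (g m') (if m' ∈ T' I then ((-1 : ℂ) ^ I.card) else 0)
      = AddMonoidAlgebra.single (g m')
        (∑ I ∈ (Finset.univ : Finset (Fin r)).powerset,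
          (if m' ∈ T' I then ((-1 : ℂ) ^ I.card) else 0)) :=
    (map_sum sHom _ _).symm
  rw [e4, hcoef, AddMonoidAlgebra.single_zero]
end
end

section
/- Let u_1, …, u_k ∈ ℤ^n and let K = cone(u_1,…,u_k) = {λ_1 u_1 + ⋯ + λ_k u_k : λ_1,…,λ_k ≥ 0} ⊆ ℝ^n. Assume K is pointed, i.e. K ∩ (−K) = {0}. Let z ∈ (ℂ ∖ {0})^n satisfy |z^{u_i}| < 1 for all i = 1,…,k. Then the family (z^m)_{m ∈ K ∩ ℤ^n} is absolutely summable, i.e. Σ_{m ∈ K ∩ ℤ^n} |z^m| < ∞. -/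
open scoped BigOperators Pointwise

noncomputable section

lemma aux_sumZ {a : ℝ} (ha : 0 < a) :
    Summable (fun x : ℤ => Real.exp (-a * |(x : ℝ)|)) := by
  have hN : Summable (fun n : ℕ => Real.exp ((n : ℝ) * (-a))) :=
    Real.summable_exp_nat_mul_iff.mpr (neg_lt_zero.mpr ha)
  apply Summable.of_nat_of_neg
  · refine hN.congr fun n => ?_
    rw [Int.cast_natCast, abs_of_nonneg (Nat.cast_nonneg n), mul_comm]
  · refine hN.congr fun n => ?_
    push_cast
    rw [abs_neg, abs_of_nonneg (Nat.cast_nonneg n), mul_comm]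

lemma aux_pi (n : ℕ) {a : ℝ} (ha : 0 < a) :
    Summable (fun m : Fin n → ℤ => Real.exp (-a * ∑ j, |((m j : ℤ) : ℝ)|)) := by
  induction n with
  | zero => exact Summable.of_finite
  | succ n ih =>
    have h := (aux_sumZ ha).mul_of_nonneg ih
      (fun _ => (Real.exp_pos _).le) (fun _ => (Real.exp_pos _).le)
    rw [← (Fin.consEquiv (fun _ : Fin (n + 1) => ℤ)).summable_iff]
    refine h.congr fun p => ?_
    simp only [Function.comp, Fin.consEquiv, Equiv.coe_fn_mk]
    rw [← Real.exp_add, Fin.sum_univ_succ]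
    congr 1
    simp [Fin.cons_zero, Fin.cons_succ, mul_add]

lemma norm_prod_zpow_eq_exp {n : ℕ} (z : Fin n → ℂ) (hz : ∀ i, z i ≠ 0) (v : Fin n → ℤ) :
    ‖∏ j, z j ^ (v j)‖ = Real.exp (∑ j, (v j : ℝ) * Real.log ‖z j‖) := by
  rw [norm_prod, Real.exp_sum]
  refine Finset.prod_congr rfl fun j _ => ?_
  have hzj : (0:ℝ) < ‖z j‖ := norm_pos_iff.mpr (hz j)
  rw [norm_zpow, ← Real.rpow_intCast, Real.rpow_def_of_pos hzj, mul_comm]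

theorem cone_monomials_abs_summable {n k : ℕ}
    (u : Fin k → (Fin n → ℤ))
    (K : Set (Fin n → ℝ))
    (hK : K = {x | ∃ lam : Fin k → ℝ, (∀ i, 0 ≤ lam i) ∧ x = ∑ i, lam i • latC (u i)})
    (hpointed : ∀ x ∈ K, -x ∈ K → x = 0)
    (z : Fin n → ℂ) (hz : ∀ i, z i ≠ 0)
    (hlt : ∀ i : Fin k, ‖∏ j, z j ^ (u i j)‖ < 1) :
    Summable (fun m : {m : Fin n → ℤ | latC m ∈ K} =>
      ‖∏ j, z j ^ ((m : Fin n → ℤ) j)‖) := by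
  set c : Fin n → ℝ := fun j => Real.log ‖z j‖ with hc
  have hL : ∀ i, ∑ j, ((u i j : ℝ)) * c j < 0 := by
    intro i
    have h := hlt i
    rw [norm_prod_zpow_eq_exp z hz (u i)] at h
    exact Real.exp_lt_one_iff.mp h
  have key : ∃ ε > 0, ∀ m : Fin n → ℤ, latC m ∈ K →
      ∑ j, (m j : ℝ) * c j ≤ -ε * ∑ j, |((m j : ℤ) : ℝ)| := by
    rcases Nat.eq_zero_or_pos k with hk | hk
    · subst hk
      refine ⟨1, one_pos, fun m hm => ?_⟩
      rw [hK] at hm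
      obtain ⟨lam, _, hme⟩ := hm
      simp only [Finset.univ_eq_empty, Finset.sum_empty] at hme
      have hm0 : ∀ j, (m j : ℝ) = 0 := fun j => congrFun hme j
      simp [hm0]
    · haveI : Nonempty (Fin k) := Fin.pos_iff_nonempty.mp hk
      have hne : (Finset.univ : Finset (Fin k)).Nonempty := Finset.univ_nonempty
      set δ : ℝ := Finset.univ.inf' hne (fun i => -(∑ j, (u i j : ℝ) * c j)) with hδ
      have hδpos : 0 < δ := by
        rw [hδ, Finset.lt_inf'_iff]
        exact fun i _ => neg_pos.mpr (hL i)
      set M : ℝ := Finset.univ.sup' hne (fun i => ∑ j, |((u i j : ℤ) : ℝ)|) with hM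
      have hM0 : 0 ≤ M := by
        obtain ⟨i, hi⟩ := hne
        exact le_trans (Finset.sum_nonneg fun j _ => abs_nonneg _)
          (Finset.le_sup' (fun i => ∑ j, |((u i j : ℤ) : ℝ)|) hi)
      have hM1 : 0 < M + 1 := by linarith
      refine ⟨δ / (M + 1), div_pos hδpos hM1, fun m hm => ?_⟩
      rw [hK] at hm
      obtain ⟨lam, hlam, hme⟩ := hm
      have hmj : ∀ j, (m j : ℝ) = ∑ i, lam i * (u i j : ℝ) := by
        intro j
        have := congrFun hme j
        simpa [latC, Finset.sum_apply] using this
      set S : ℝ := ∑ i, lam i with hS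
      have hS0 : 0 ≤ S := Finset.sum_nonneg fun i _ => hlam i
      have h1 : ∑ j, (m j : ℝ) * c j ≤ -δ * S := by
        have heq : ∑ j, (m j : ℝ) * c j = ∑ i, lam i * ∑ j, (u i j : ℝ) * c j := by
          simp_rw [hmj, Finset.sum_mul, Finset.mul_sum]
          rw [Finset.sum_comm]
          exact Finset.sum_congr rfl fun i _ => Finset.sum_congr rfl fun j _ => by ring
        rw [heq]
        calc ∑ i, lam i * ∑ j, (u i j : ℝ) * c j ≤ ∑ i, lam i * (-δ) := by
              refine Finset.sum_le_sum fun i _ => mul_le_mul_of_nonneg_left ?_ (hlam i)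
              have := Finset.inf'_le (fun i => -(∑ j, (u i j : ℝ) * c j)) (Finset.mem_univ i)
              linarith
          _ = -δ * S := by rw [← Finset.sum_mul, hS]; ring
      have h2 : ∑ j, |((m j : ℤ) : ℝ)| ≤ (M + 1) * S := by
        calc ∑ j, |((m j : ℤ) : ℝ)| ≤ ∑ j, ∑ i, lam i * |((u i j : ℤ) : ℝ)| := by
              refine Finset.sum_le_sum fun j _ => ?_
              rw [hmj j]
              refine (Finset.abs_sum_le_sum_abs _ _).trans
                (Finset.sum_le_sum fun i _ => ?_)
              rw [abs_mul, abs_of_nonneg (hlam i)]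
          _ = ∑ i, lam i * ∑ j, |((u i j : ℤ) : ℝ)| := by
              rw [Finset.sum_comm]
              exact Finset.sum_congr rfl fun i _ => by rw [Finset.mul_sum]
          _ ≤ ∑ i, lam i * (M + 1) := by
              refine Finset.sum_le_sum fun i _ => mul_le_mul_of_nonneg_left ?_ (hlam i)
              have := Finset.le_sup' (fun i => ∑ j, |((u i j : ℤ) : ℝ)|) (Finset.mem_univ i)
              linarith
          _ = (M + 1) * S := by rw [← Finset.sum_mul, hS]; ring
      have habs : (0:ℝ) ≤ ∑ j, |((m j : ℤ) : ℝ)| := Finset.sum_nonneg fun j _ => abs_nonneg _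
      have hεle : (δ / (M + 1)) * ∑ j, |((m j : ℤ) : ℝ)| ≤ δ * S := by
        have := mul_le_mul_of_nonneg_left h2 (le_of_lt (div_pos hδpos hM1))
        calc (δ / (M + 1)) * ∑ j, |((m j : ℤ) : ℝ)| ≤ (δ / (M + 1)) * ((M + 1) * S) := this
          _ = δ * S := by field_simp
      linarith
  obtain ⟨ε, hε, hbound⟩ := key
  have hsum := (aux_pi n hε).subtype {m : Fin n → ℤ | latC m ∈ K}
  refine Summable.of_nonneg_of_le (fun _ => norm_nonneg _) ?_ hsum
  rintro ⟨m, hm⟩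
  rw [norm_prod_zpow_eq_exp z hz m]
  exact Real.exp_le_exp.mpr (hbound m hm)
end
end

section
/- Let P ⊆ ℝ^n be a nonempty lattice polytope, let w ∈ V(P) be a vertex, and let K_w = {w + u : ∃ ε > 0 with w + εu ∈ P} be the tangent cone of P at w. Let z ∈ (ℂ∖{0})^n be such that |z^{v−w}| < 1 for every vertex v ∈ V(P) with v ≠ w. Then (a) the family (z^m)_{m ∈ (K_w − w) ∩ ℤ^n} is absolutely summable, and (b) the sequence of finite sums Σ_{m ∈ k(P−w) ∩ ℤ^n} z^m converges, as k → ∞, to Σ_{m ∈ (K_w − w) ∩ ℤ^n} z^m. -/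
open scoped BigOperators Pointwise

noncomputable section

lemma lattice_finite {n : ℕ} {S : Set (Fin n → ℝ)} (hS : Bornology.IsBounded S) :
    {m : Fin n → ℤ | latC m ∈ S}.Finite := by
  obtain ⟨R, hR⟩ := hS.exists_norm_le
  have : {m : Fin n → ℤ | latC m ∈ S} ⊆ Set.pi Set.univ (fun _ : Fin n => Set.Icc (-⌈R⌉) ⌈R⌉) := by
    intro m hm j _
    have h1 : ‖latC m‖ ≤ R := hR _ hm
    have h2 : ‖latC m j‖ ≤ ‖latC m‖ := norm_le_pi_norm (latC m) j
    have h3 : |(m j : ℝ)| ≤ R := by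
      simpa [latC, Real.norm_eq_abs] using h2.trans h1
    have h4 : (m j : ℝ) ≤ ⌈R⌉ := le_trans (le_trans (le_abs_self _) h3) (Int.le_ceil R)
    have h5 : -(⌈R⌉ : ℝ) ≤ (m j : ℝ) := by
      have := (abs_le.1 h3).1
      have : -(R : ℝ) ≤ (m j : ℝ) := this
      exact le_trans (neg_le_neg (Int.le_ceil R)) this
    constructor
    · exact_mod_cast h5
    · exact_mod_cast h4
  exact Set.Finite.subset (Set.Finite.pi (fun _ => Set.finite_Icc _ _)) this

lemma smul_set_mono_of_convex {n : ℕ} {S : Set (Fin n → ℝ)} (hconv : Convex ℝ S)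
    (h0 : (0 : Fin n → ℝ) ∈ S) {a b : ℝ} (ha : 0 ≤ a) (hab : a ≤ b) : a • S ⊆ b • S := by
  rcases eq_or_lt_of_le (ha.trans hab) with hb | hb
  · have : a = 0 := le_antisymm (hab.trans hb.symm.le) ha
    rw [this, ← hb]
  rintro x ⟨s, hs, rfl⟩
  refine ⟨(a / b) • s, ?_, ?_⟩
  · have := hconv h0 hs (a := 1 - a/b) (b := a/b) (by
      have : a / b ≤ 1 := div_le_one_of_le₀ hab hb.le
      linarith) (div_nonneg ha hb.le) (by ring)
    simpa using this
  · simp [smul_smul, mul_div_cancel₀, hb.ne']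

lemma summable_geom_int {r : ℝ} (h0 : 0 ≤ r) (h1 : r < 1) :
    Summable (fun k : ℤ => r ^ k.natAbs) := by
  apply Summable.of_nat_of_neg <;>
    simpa using summable_geometric_of_lt_one h0 h1

lemma summable_geom_pi {r : ℝ} (h0 : 0 ≤ r) (h1 : r < 1) :
    ∀ n : ℕ, Summable (fun m : Fin n → ℤ => ∏ j, r ^ (m j).natAbs) := by
  intro n
  induction n with
  | zero => exact .of_finite
  | succ n ih =>
      have key : Summable (fun x : ℤ × (Fin n → ℤ) =>
          (r ^ x.1.natAbs) * ∏ j, r ^ (x.2 j).natAbs) :=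
        Summable.mul_of_nonneg (f := fun k : ℤ => r ^ k.natAbs)
          (g := fun m : Fin n → ℤ => ∏ j, r ^ (m j).natAbs)
          (summable_geom_int h0 h1) ih
          (fun k => pow_nonneg h0 _) (fun m => Finset.prod_nonneg fun j _ => pow_nonneg h0 _)
      have := ((Fin.consEquiv fun _ : Fin (n + 1) => ℤ).symm.summable_iff
        (f := fun x : ℤ × (Fin n → ℤ) => (r ^ x.1.natAbs) * ∏ j, r ^ (x.2 j).natAbs)).2 key
      refine this.congr ?_
      intro m
      simp [Fin.consEquiv, Fin.prod_univ_succ, Fin.tail]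

lemma norm_prod_zpow {n : ℕ} (z : Fin n → ℂ) (hz : ∀ i, z i ≠ 0) (m : Fin n → ℤ) :
    ‖∏ j, z j ^ (m j)‖ = Real.exp (∑ j, (m j : ℝ) * Real.log ‖z j‖) := by
  rw [norm_prod, Real.exp_sum]
  refine Finset.prod_congr rfl fun j _ => ?_
  have hpos : (0:ℝ) < ‖z j‖ := norm_pos_iff.2 (hz j)
  rw [norm_zpow, ← Real.rpow_intCast, Real.rpow_def_of_pos hpos, mul_comm]

/-- the linear functional x ↦ ∑ x j * c j -/
def ell {n : ℕ} (c : Fin n → ℝ) : (Fin n → ℝ) →ₗ[ℝ] ℝ where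
  toFun := fun x => ∑ j, x j * c j
  map_add' := by intro x y; simp [add_mul, Finset.sum_add_distrib]
  map_smul' := by intro a x; simp [Finset.mul_sum, mul_assoc]

lemma cone_bound {n : ℕ} (V : Finset (Fin n → ℤ)) (w : Fin n → ℤ) (hw : w ∈ V)
    (c : Fin n → ℝ)
    (hneg : ∀ v ∈ V, v ≠ w → ell c (latC v - latC w) < 0) :
    ∃ α : ℝ, 0 < α ∧ ∀ x : Fin n → ℝ,
      (∃ ε : ℝ, 0 < ε ∧ latC w + ε • x ∈ convexHull ℝ (latC '' (V : Set (Fin n → ℤ)))) →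
      ell c x ≤ -α * ∑ j, |x j| := by
  classical
  set Ft : Finset (Fin n → ℝ) := V.image latC with hFt
  have hcoe : (Ft : Set (Fin n → ℝ)) = latC '' (V : Set (Fin n → ℤ)) := Finset.coe_image
  set F' : Finset (Fin n → ℝ) := Ft.erase (latC w) with hF'
  have hneg' : ∀ y ∈ F', ell c (y - latC w) < 0 := by
    intro y hy
    obtain ⟨hyne, hyFt⟩ := Finset.mem_erase.1 hy
    obtain ⟨v, hv, rfl⟩ := Finset.mem_image.1 hyFt
    exact hneg v hv (fun h => hyne (by rw [h]))
  -- key representation step, shared by both cases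
  have hrep : ∀ x : Fin n → ℝ, ∀ ε : ℝ, 0 < ε →
      latC w + ε • x ∈ convexHull ℝ (latC '' (V : Set (Fin n → ℤ))) →
      ∃ μ : (Fin n → ℝ) → ℝ, (∀ y ∈ Ft, 0 ≤ μ y) ∧
        ε • x = ∑ y ∈ Ft, μ y • (y - latC w) := by
    intro x ε hε hx
    rw [← hcoe] at hx
    obtain ⟨μ, hμ0, hμ1, hμc⟩ := Finset.mem_convexHull.1 hx
    refine ⟨μ, hμ0, ?_⟩
    rw [Finset.centerMass_eq_of_sum_1 _ _ hμ1] at hμc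
    have heq : ∑ y ∈ Ft, μ y • (y - latC w) = (∑ y ∈ Ft, μ y • y) - latC w := by
      simp [smul_sub, Finset.sum_sub_distrib, ← Finset.sum_smul, hμ1]
    simp only [id] at hμc
    rw [heq, hμc]
    abel
  -- case split on F'
  rcases eq_or_ne F' ∅ with hFe | hFne
  · -- all vertices equal w : the cone is {0}
    refine ⟨1, one_pos, fun x ⟨ε, hε, hx⟩ => ?_⟩
    obtain ⟨μ, hμ0, hsum⟩ := hrep x ε hε hx
    have hall : ∀ y ∈ Ft, y = latC w := by
      intro y hy
      by_contra hne
      exact (Finset.eq_empty_iff_forall_notMem.1 hFe y) (Finset.mem_erase.2 ⟨hne, hy⟩)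
    have hx0 : x = 0 := by
      have : ε • x = 0 := by
        rw [hsum]
        refine Finset.sum_eq_zero fun y hy => ?_
        rw [hall y hy]; simp
      rcases smul_eq_zero.1 this with h | h
      · exact absurd h hε.ne'
      · exact h
    simp [hx0]
  · -- nontrivial case
    obtain ⟨v₀, hv₀, hδmin⟩ := F'.exists_min_image (fun y => -(ell c (y - latC w)))
      (Finset.nonempty_of_ne_empty hFne)
    set δ : ℝ := -(ell c (v₀ - latC w)) with hδ
    have hδpos : 0 < δ := by simpa [hδ] using hneg' v₀ hv₀
    obtain ⟨y₁, hy₁, hMmax⟩ := F'.exists_max_image (fun y => ∑ j, |y j - latC w j|)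
      (Finset.nonempty_of_ne_empty hFne)
    set M : ℝ := ∑ j, |y₁ j - latC w j| with hM
    have hMpos : 0 < M := by
      obtain ⟨hne, _⟩ := Finset.mem_erase.1 hy₁
      have : ∃ j, y₁ j ≠ latC w j := by
        by_contra hc
        push_neg at hc
        exact hne (funext hc)
      obtain ⟨j, hj⟩ := this
      refine Finset.sum_pos' (fun i _ => abs_nonneg _) ⟨j, Finset.mem_univ j, ?_⟩
      exact abs_pos.2 (sub_ne_zero.2 hj)
    refine ⟨δ / M, div_pos hδpos hMpos, fun x ⟨ε, hε, hx⟩ => ?_⟩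
    obtain ⟨μ, hμ0, hsum⟩ := hrep x ε hε hx
    set S : ℝ := ∑ y ∈ F', μ y with hS
    have hS0 : 0 ≤ S :=
      Finset.sum_nonneg fun y hy => hμ0 y (Finset.mem_of_mem_erase hy)
    -- bound on ℓ
    have hl1 : ε * ell c x ≤ -δ * S := by
      have h1 : ell c (ε • x) = ∑ y ∈ F', μ y * ell c (y - latC w) := by
        rw [hsum, map_sum]
        simp only [map_smul, smul_eq_mul]
        exact (Finset.sum_erase _ (by simp)).symm
      have h2 : ∑ y ∈ F', μ y * ell c (y - latC w) ≤ ∑ y ∈ F', μ y * (-δ) := by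
        refine Finset.sum_le_sum fun y hy => ?_
        refine mul_le_mul_of_nonneg_left ?_ (hμ0 y (Finset.mem_of_mem_erase hy))
        have := hδmin y hy
        linarith
      have h3 : ell c (ε • x) = ε * ell c x := by simp
      calc ε * ell c x = ∑ y ∈ F', μ y * ell c (y - latC w) := by rw [← h3, h1]
        _ ≤ ∑ y ∈ F', μ y * (-δ) := h2
        _ = -δ * S := by rw [hS, Finset.mul_sum]; exact Finset.sum_congr rfl fun y _ => by ring
    -- bound on ℓ1 norm
    have hl2 : ε * (∑ j, |x j|) ≤ M * S := by
      have h1 : ∀ j, ε * |x j| = |(ε • x) j| := by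
        intro j
        simp [abs_mul, abs_of_pos hε]
      have h2 : ∀ j, |(ε • x) j| ≤ ∑ y ∈ Ft, μ y * |y j - latC w j| := by
        intro j
        rw [hsum]
        calc |(∑ y ∈ Ft, μ y • (y - latC w)) j| = |∑ y ∈ Ft, μ y * (y j - latC w j)| := by
              congr 1
              simp [Finset.sum_apply]
          _ ≤ ∑ y ∈ Ft, |μ y * (y j - latC w j)| := Finset.abs_sum_le_sum_abs _ _
          _ = ∑ y ∈ Ft, μ y * |y j - latC w j| := Finset.sum_congr rfl fun y hy => by
              rw [abs_mul, abs_of_nonneg (hμ0 y hy)]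
      calc ε * (∑ j, |x j|) = ∑ j, |(ε • x) j| := by
            rw [Finset.mul_sum]; exact Finset.sum_congr rfl fun j _ => h1 j
        _ ≤ ∑ j, ∑ y ∈ Ft, μ y * |y j - latC w j| := Finset.sum_le_sum fun j _ => h2 j
        _ = ∑ y ∈ Ft, μ y * ∑ j, |y j - latC w j| := by
            rw [Finset.sum_comm]
            exact Finset.sum_congr rfl fun y _ => by rw [Finset.mul_sum]
        _ = ∑ y ∈ F', μ y * ∑ j, |y j - latC w j| := (Finset.sum_erase _ (by simp)).symm
        _ ≤ ∑ y ∈ F', μ y * M := Finset.sum_le_sum fun y hy =>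
            mul_le_mul_of_nonneg_left (hMmax y hy) (hμ0 y (Finset.mem_of_mem_erase hy))
        _ = M * S := by rw [hS, Finset.mul_sum]; exact Finset.sum_congr rfl fun y _ => by ring
    -- combine
    have key : ε * ell c x ≤ ε * (-(δ / M) * ∑ j, |x j|) := by
      have h4 : (δ / M) * (ε * ∑ j, |x j|) ≤ (δ / M) * (M * S) :=
        mul_le_mul_of_nonneg_left hl2 (div_nonneg hδpos.le hMpos.le)
      have h5 : (δ / M) * (M * S) = δ * S := by
        field_simp
      nlinarith [hl1]
    have := le_of_mul_le_mul_left key hε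
    linarith [this]

theorem tangent_cone_summable_and_limit {n : ℕ}
    (P : Set (Fin n → ℝ)) (hPlat : IsLatticePolytope P) (hPne : P.Nonempty)
    (V : Finset (Fin n → ℤ)) (hV : latC '' (V : Set (Fin n → ℤ)) = Set.extremePoints ℝ P)
    (w : Fin n → ℤ) (hw : w ∈ V)
    (z : Fin n → ℂ) (hz : ∀ i, z i ≠ 0)
    (hlt : ∀ v ∈ V, v ≠ w → ‖∏ j, z j ^ (v j - w j)‖ < 1) :
    Summable (fun m : {m : Fin n → ℤ |
        latC m ∈ {x : Fin n → ℝ | ∃ ε : ℝ, 0 < ε ∧ latC w + ε • x ∈ P}} =>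
      ‖∏ j, z j ^ ((m : Fin n → ℤ) j)‖) ∧
    Filter.Tendsto
      (fun k : ℕ =>
        ∑ᶠ m ∈ {m : Fin n → ℤ | latC m ∈ (k : ℝ) • (P - {latC w})}, ∏ j, z j ^ (m j))
      Filter.atTop
      (nhds (∑' m : {m : Fin n → ℤ |
          latC m ∈ {x : Fin n → ℝ | ∃ ε : ℝ, 0 < ε ∧ latC w + ε • x ∈ P}},
        ∏ j, z j ^ ((m : Fin n → ℤ) j))) := by
  classical
  obtain ⟨F, hF⟩ := hPlat
  have hcomp : IsCompact P := by
    rw [hF]; exact (F.finite_toSet.image latC).isCompact_convexHull ℝ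
  have hconv : Convex ℝ P := hF ▸ convex_convexHull ℝ _
  have hP : P = convexHull ℝ (latC '' (V : Set (Fin n → ℤ))) := by
    rw [hV]
    have hKM := closure_convexHull_extremePoints hcomp hconv
    have hcl : IsClosed (convexHull ℝ (Set.extremePoints ℝ P)) := by
      rw [← hV]
      exact ((V.finite_toSet.image latC).isCompact_convexHull ℝ).isClosed
    exact (hKM.symm.trans hcl.closure_eq)
  have hwP : latC w ∈ P := by
    have : latC w ∈ Set.extremePoints ℝ P := by
      rw [← hV]; exact Set.mem_image_of_mem _ hw
    exact extremePoints_subset this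
  -- the linear functional
  set c : Fin n → ℝ := fun j => Real.log ‖z j‖ with hc
  have hneg : ∀ v ∈ V, v ≠ w → ell c (latC v - latC w) < 0 := by
    intro v hv hvw
    have h1 := hlt v hv hvw
    rw [norm_prod_zpow z hz (fun j => v j - w j)] at h1
    have h2 : ∑ j, ((v j - w j : ℤ) : ℝ) * c j < 0 := Real.exp_lt_one_iff.1 h1
    have h3 : ell c (latC v - latC w) = ∑ j, ((v j - w j : ℤ) : ℝ) * c j := by
      simp only [ell, LinearMap.coe_mk, AddHom.coe_mk]
      refine Finset.sum_congr rfl fun j _ => ?_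
      simp [latC]
    rw [h3]; exact h2
  obtain ⟨α, hα, hbound⟩ := cone_bound V w hw c hneg
  -- the tangent cone set
  set C : Set (Fin n → ℝ) := {x : Fin n → ℝ | ∃ ε : ℝ, 0 < ε ∧ latC w + ε • x ∈ P} with hC
  set r : ℝ := Real.exp (-α) with hr
  have hr0 : 0 ≤ r := Real.exp_nonneg _
  have hr1 : r < 1 := Real.exp_lt_one_iff.2 (neg_neg_iff_pos.2 hα)
  -- summability (part a)
  have hub : ∀ m : Fin n → ℤ, latC m ∈ C →
      ‖∏ j, z j ^ (m j)‖ ≤ ∏ j, r ^ (m j).natAbs := by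
    intro m hm
    rw [norm_prod_zpow z hz m]
    have h1 : ell c (latC m) ≤ -α * ∑ j, |latC m j| := by
      refine hbound (latC m) ?_
      obtain ⟨ε, hε, hmem⟩ := hm
      exact ⟨ε, hε, hP ▸ hmem⟩
    have h2 : (∑ j, (m j : ℝ) * c j) ≤ -α * ∑ j, |latC m j| := h1
    calc Real.exp (∑ j, (m j : ℝ) * c j) ≤ Real.exp (-α * ∑ j, |latC m j|) :=
          Real.exp_le_exp.2 h2
      _ = ∏ j, r ^ (m j).natAbs := by
          rw [Finset.mul_sum, Real.exp_sum]
          refine Finset.prod_congr rfl fun j _ => ?_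
          have : |latC m j| = ((m j).natAbs : ℝ) := by
            simp [latC, Nat.cast_natAbs]
          rw [this, mul_comm, Real.exp_nat_mul]
  have hsumA : Summable (fun m : {m : Fin n → ℤ | latC m ∈ C} =>
      ‖∏ j, z j ^ ((m : Fin n → ℤ) j)‖) := by
    refine Summable.of_nonneg_of_le (fun m => norm_nonneg _) (fun m => hub m.1 m.2) ?_
    exact (summable_geom_pi hr0 hr1 n).subtype _
  refine ⟨hsumA, ?_⟩
  set g : {m : Fin n → ℤ | latC m ∈ C} → ℂ :=
    fun m => ∏ j, z j ^ ((m : Fin n → ℤ) j) with hg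
  have hsumB : Summable g := Summable.of_norm hsumA
  set S : Set (Fin n → ℝ) := P - {latC w} with hSdef
  have hSconv : Convex ℝ S := hconv.sub (convex_singleton _)
  have h0S : (0 : Fin n → ℝ) ∈ S := by
    exact Set.mem_sub.2 ⟨latC w, hwP, latC w, rfl, sub_self _⟩
  have hScomp : IsCompact S := by
    rw [hSdef, Set.sub_singleton]
    exact hcomp.image (continuous_id.sub continuous_const)
  have hfin : ∀ k : ℕ, {m : Fin n → ℤ | latC m ∈ (k : ℝ) • S}.Finite := fun k =>
    lattice_finite ((hScomp.smul (k : ℝ)).isBounded)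
  have hsubC : ∀ (k : ℕ) (x : Fin n → ℝ), x ∈ (k : ℝ) • S → x ∈ C := by
    intro k x hx
    rcases Nat.eq_zero_or_pos k with hk | hk
    · subst hk
      rw [Nat.cast_zero, Set.zero_smul_set ⟨0, h0S⟩] at hx
      have hx0 : x = 0 := by simpa using hx
      exact ⟨1, one_pos, by simpa [hx0] using hwP⟩
    · rw [Set.mem_smul_set] at hx
      obtain ⟨s, hs, rfl⟩ := hx
      obtain ⟨p, hp, b, hb, rfl⟩ := hs
      rw [Set.mem_singleton_iff] at hb
      subst hb
      have hkpos : (0 : ℝ) < (k : ℝ) := Nat.cast_pos.2 hk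
      refine ⟨(k : ℝ)⁻¹, inv_pos.2 hkpos, ?_⟩
      rw [smul_smul, inv_mul_cancel₀ hkpos.ne', one_smul]
      have : latC w + (p - latC w) = p := by abel
      rw [this]; exact hp
  have hCex : ∀ x ∈ C, ∃ k : ℕ, x ∈ (k : ℝ) • S := by
    rintro x ⟨ε, hε, hx⟩
    refine ⟨⌈ε⁻¹⌉₊, ?_⟩
    have hx' : ε • x ∈ S := by
      have h1 : (latC w + ε • x) - latC w ∈ S :=
        Set.sub_mem_sub hx (Set.mem_singleton (latC w))
      have h2 : (latC w + ε • x) - latC w = ε • x := by abel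
      rwa [h2] at h1
    have h1 : x ∈ ε⁻¹ • S :=
      ⟨ε • x, hx', by simp [smul_smul, inv_mul_cancel₀ hε.ne']⟩
    exact smul_set_mono_of_convex hSconv h0S (inv_nonneg.2 hε.le) (Nat.le_ceil _) h1
  set Fk : ℕ → Finset (Fin n → ℤ) := fun k => (hfin k).toFinset with hFk
  set T : ℕ → Finset {m : Fin n → ℤ | latC m ∈ C} :=
    fun k => (Fk k).subtype _ with hT
  have hTmono : Monotone T := by
    intro k l hkl x hx
    simp only [hT, Finset.mem_subtype, hFk, Set.Finite.mem_toFinset] at hx ⊢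
    refine smul_set_mono_of_convex hSconv h0S (by positivity) ?_ hx
    exact_mod_cast hkl
  have hTtend : Filter.Tendsto T Filter.atTop Filter.atTop := by
    refine Filter.tendsto_atTop_finset_of_monotone hTmono fun x => ?_
    obtain ⟨k, hk⟩ := hCex (latC x.1) x.2
    exact ⟨k, by simp only [hT, Finset.mem_subtype, hFk, Set.Finite.mem_toFinset]; exact hk⟩
  have hHS : HasSum g (∑' m, g m) := hsumB.hasSum
  have hcomp2 : Filter.Tendsto (fun k => ∑ b ∈ T k, g b)
      Filter.atTop (nhds (∑' m, g m)) := hHS.comp hTtend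
  refine hcomp2.congr fun k => ?_
  have h1 : ∑ b ∈ T k, g b
      = ∑ m ∈ (Fk k).filter (fun m => m ∈ {m : Fin n → ℤ | latC m ∈ C}),
          ∏ j, z j ^ (m j) :=
    Finset.sum_subtype_eq_sum_filter (s := Fk k) (fun m => ∏ j, z j ^ (m j))
  have h2 : (Fk k).filter (fun m => m ∈ {m : Fin n → ℤ | latC m ∈ C}) = Fk k :=
    Finset.filter_true_of_mem fun m hm =>
      hsubC k (latC m) ((hfin k).mem_toFinset.1 hm)
  have h3 : {m : Fin n → ℤ | latC m ∈ (k : ℝ) • S} = ↑(Fk k) :=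
    ((hfin k).coe_toFinset).symm
  rw [h1, h2, h3, finsum_mem_coe_finset]
end
end

section
/- Let n ≥ 1 and let κ, λ, μ, ν be partitions of length at most n such that μ_i ≤ λ_i for all i and ν_i + kμ_i ≤ κ_i + kλ_i for all i, for some positive integer k. Let T = GT_{λ/μ} ∩ ℤ^{(n+1)×n} be the (finite) set of integral Gelfand–Tsetlin patterns of shape λ/μ, and set N = #T. Then there exists an integer r ≥ 0 such that for all l ≥ r: s_{(κ+(l+N)λ)/(ν+(l+N)μ)}(x) = Σ_{∅≠S⊆T} (−1)^{1+|S|} · x^{Σ_{p∈S} w(p)} · s_{(κ+(l+N−|S|)λ)/(ν+(l+N−|S|)μ)}(x); that is, the sequence {s_{(κ+lλ)/(ν+lμ)}(x)}_{l≥r} satisfies a linear recursion with characteristic polynomial ∏_{p∈T} (X − x^{w(p)}). -/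
open scoped BigOperators Pointwise

noncomputable section

/-- The Gelfand–Tsetlin polytope of shape `λ/μ`: arrays with top row `λ` and bottom row `μ`
(written in weakly increasing order) that weakly increase in north-east and south-east
direction. -/
def GTPolytope (n : ℕ) (lam mu : Fin n → ℕ) : Set (Fin (n + 1) → Fin n → ℝ) :=
  {x | (∀ j : Fin n, x 0 j = (lam j.rev : ℝ)) ∧
       (∀ j : Fin n, x (Fin.last n) j = (mu j.rev : ℝ)) ∧
       (∀ (i j : Fin n), x i.succ j ≤ x i.castSucc j) ∧
       (∀ (i j : Fin n) (h : (j : ℕ) + 1 < n), x i.castSucc j ≤ x i.succ ⟨(j : ℕ) + 1, h⟩)}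

/-- The weight of a (real) Gelfand–Tsetlin pattern. -/
def gtWeight {n : ℕ} (x : Fin (n + 1) → Fin n → ℝ) : Fin n → ℝ :=
  fun i => ∑ j, (x i.castSucc j - x i.succ j)

/-- The weight of an integral Gelfand–Tsetlin pattern. -/
def gtWeightInt {n : ℕ} (p : Fin (n + 1) → Fin n → ℤ) : Fin n → ℤ :=
  fun i => ∑ j, (p i.castSucc j - p i.succ j)

/-- Coercion of an integral pattern to a real one. -/
def patC {n : ℕ} (p : Fin (n + 1) → Fin n → ℤ) : Fin (n + 1) → Fin n → ℝ :=
  fun i j => (p i j : ℝ)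

/-- The skew Schur polynomial `s_{λ/μ} = ∑_p x^{w(p)}`, the sum over all integral
Gelfand–Tsetlin patterns of shape `λ/μ`. -/
def skewSchur (n : ℕ) (lam mu : Fin n → ℕ) : MvPolynomial (Fin n) ℂ :=
  ∑ᶠ p ∈ {p : Fin (n + 1) → Fin n → ℤ | patC p ∈ GTPolytope n lam mu},
    MvPolynomial.monomial (Finsupp.equivFunOnFinite.symm (fun i => (gtWeightInt p i).toNat)) (1 : ℂ)

/-! ### Integer patterns -/

abbrev Pat (n : ℕ) := Fin (n + 1) → Fin n → ℤ

/-- Integer Gelfand-Tsetlin pattern with top row `a` and bottom row `b`. -/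
def IsPatZ {n : ℕ} (a b : Fin n → ℕ) (p : Pat n) : Prop :=
  (∀ j : Fin n, p 0 j = (a j.rev : ℤ)) ∧
  (∀ j : Fin n, p (Fin.last n) j = (b j.rev : ℤ)) ∧
  (∀ (i j : Fin n), p i.succ j ≤ p i.castSucc j) ∧
  (∀ (i j : Fin n) (h : (j : ℕ) + 1 < n), p i.castSucc j ≤ p i.succ ⟨(j : ℕ) + 1, h⟩)

lemma patC_mem_iff {n : ℕ} (a b : Fin n → ℕ) (p : Pat n) :
    patC p ∈ GTPolytope n a b ↔ IsPatZ a b p := by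
  unfold GTPolytope IsPatZ patC
  simp only [Set.mem_setOf_eq]
  constructor
  · rintro ⟨h1, h2, h3, h4⟩
    exact ⟨fun j => by exact_mod_cast h1 j, fun j => by exact_mod_cast h2 j,
      fun i j => by exact_mod_cast h3 i j, fun i j h => by exact_mod_cast h4 i j h⟩
  · rintro ⟨h1, h2, h3, h4⟩
    exact ⟨fun j => by exact_mod_cast h1 j, fun j => by exact_mod_cast h2 j,
      fun i j => by exact_mod_cast h3 i j, fun i j h => by exact_mod_cast h4 i j h⟩

/-- Entries of a pattern are bounded above by the top row. -/
lemma pat_le_top {n : ℕ} {a b : Fin n → ℕ} {p : Pat n} (hp : IsPatZ a b p)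
    (i : Fin (n + 1)) (j : Fin n) : p i j ≤ (a j.rev : ℤ) := by
  induction i using Fin.induction with
  | zero => exact le_of_eq (hp.1 j)
  | succ i ih => exact le_trans (hp.2.2.1 i j) ih

/-- Entries of a pattern are bounded below by the bottom row. -/
lemma bot_le_pat {n : ℕ} {a b : Fin n → ℕ} {p : Pat n} (hp : IsPatZ a b p)
    (i : Fin (n + 1)) (j : Fin n) : (b j.rev : ℤ) ≤ p i j := by
  induction i using Fin.reverseInduction with
  | last => exact le_of_eq (hp.2.1 j).symm
  | cast i ih => exact le_trans ih (hp.2.2.1 i j)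

lemma finite_isPatZ {n : ℕ} (a b : Fin n → ℕ) : {p : Pat n | IsPatZ a b p}.Finite := by
  apply Set.Finite.subset (Set.Finite.pi (t := fun _ : Fin (n+1) =>
    Set.univ.pi (fun j : Fin n => Set.Icc ((b j.rev : ℤ)) ((a j.rev : ℤ)))) ?_)
  · intro p hp
    simp only [Set.mem_pi, Set.mem_univ, forall_true_left, Set.mem_Icc]
    exact fun i j => ⟨bot_le_pat hp i j, pat_le_top hp i j⟩
  · intro i
    exact Set.Finite.pi (fun j => Set.finite_Icc _ _)

/-- The finset of integer patterns of shape `a/b`. -/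
def Pats {n : ℕ} (a b : Fin n → ℕ) : Finset (Pat n) := (finite_isPatZ a b).toFinset

lemma mem_Pats {n : ℕ} {a b : Fin n → ℕ} {p : Pat n} : p ∈ Pats a b ↔ IsPatZ a b p := by
  simp [Pats]

lemma skewSchur_eq_sum (n : ℕ) (a b : Fin n → ℕ) :
    skewSchur n a b = ∑ p ∈ Pats a b,
      MvPolynomial.monomial (Finsupp.equivFunOnFinite.symm (fun i => (gtWeightInt p i).toNat))
        (1 : ℂ) := by
  rw [skewSchur, ← finsum_mem_coe_finset]
  congr 1
  ext p
  simp [mem_Pats, patC_mem_iff]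

/-! ### Slacks -/

abbrev Cst (n : ℕ) := (Fin n × Fin n) ⊕ (Fin n × Fin n)

def slackZ {n : ℕ} (e : Cst n) (p : Pat n) : ℤ :=
  match e with
  | .inl (i, j) => p i.castSucc j - p i.succ j
  | .inr (i, j) =>
      if h : (j : ℕ) + 1 < n then p i.succ ⟨(j : ℕ) + 1, h⟩ - p i.castSucc j else 0

def slackR {n : ℕ} (e : Cst n) (x : Fin (n + 1) → Fin n → ℝ) : ℝ :=
  match e with
  | .inl (i, j) => x i.castSucc j - x i.succ j
  | .inr (i, j) =>
      if h : (j : ℕ) + 1 < n then x i.succ ⟨(j : ℕ) + 1, h⟩ - x i.castSucc j else 0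

lemma slackZ_nonneg {n : ℕ} {a b : Fin n → ℕ} {p : Pat n} (hp : IsPatZ a b p) (e : Cst n) :
    0 ≤ slackZ e p := by
  rcases e with ⟨i, j⟩ | ⟨i, j⟩
  · simpa [slackZ] using hp.2.2.1 i j
  · by_cases h : (j : ℕ) + 1 < n
    · simpa [slackZ, h] using hp.2.2.2 i j h
    · simp [slackZ, h]

lemma slackZ_add {n : ℕ} (e : Cst n) (p q : Pat n) :
    slackZ e (p + q) = slackZ e p + slackZ e q := by
  rcases e with ⟨i, j⟩ | ⟨i, j⟩
  · simp [slackZ]; ring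
  · by_cases h : (j : ℕ) + 1 < n <;> simp [slackZ, h]; ring

lemma slackZ_sub {n : ℕ} (e : Cst n) (p q : Pat n) :
    slackZ e (p - q) = slackZ e p - slackZ e q := by
  rcases e with ⟨i, j⟩ | ⟨i, j⟩
  · simp [slackZ]; ring
  · by_cases h : (j : ℕ) + 1 < n <;> simp [slackZ, h]; ring

lemma slackZ_sum {n : ℕ} (e : Cst n) (S : Finset (Pat n)) :
    slackZ e (∑ p ∈ S, p) = ∑ p ∈ S, slackZ e p := by
  classical
  induction S using Finset.induction with
  | empty =>
      rcases e with ⟨i, j⟩ | ⟨i, j⟩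
      · simp [slackZ]
      · by_cases h : (j : ℕ) + 1 < n <;> simp [slackZ, h]
  | insert _ _ hnotmem ih =>
      rw [Finset.sum_insert hnotmem, slackZ_add, ih, Finset.sum_insert hnotmem]

/-- A pattern in slack form. -/
lemma isPatZ_iff_slack {n : ℕ} (a b : Fin n → ℕ) (p : Pat n) :
    IsPatZ a b p ↔ (∀ j : Fin n, p 0 j = (a j.rev : ℤ)) ∧
      (∀ j : Fin n, p (Fin.last n) j = (b j.rev : ℤ)) ∧ (∀ e : Cst n, 0 ≤ slackZ e p) := by
  constructor
  · intro hp
    exact ⟨hp.1, hp.2.1, slackZ_nonneg hp⟩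
  · rintro ⟨h1, h2, h3⟩
    refine ⟨h1, h2, fun i j => ?_, fun i j h => ?_⟩
    · have := h3 (.inl (i, j)); simp [slackZ] at this; linarith
    · have := h3 (.inr (i, j)); simp [slackZ, h] at this; linarith

/-- Sum of two patterns is a pattern of the summed shape. -/
lemma IsPatZ.add {n : ℕ} {a b c d : Fin n → ℕ} {p q : Pat n}
    (hp : IsPatZ a b p) (hq : IsPatZ c d q) :
    IsPatZ (fun i => a i + c i) (fun i => b i + d i) (p + q) := by
  refine ⟨fun j => ?_, fun j => ?_, fun i j => add_le_add (hp.2.2.1 i j) (hq.2.2.1 i j),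
    fun i j h => add_le_add (hp.2.2.2 i j h) (hq.2.2.2 i j h)⟩
  · simp [hp.1 j, hq.1 j]
  · simp [hp.2.1 j, hq.2.1 j]

/-- Weights of patterns are nonnegative. -/
lemma gtWeightInt_nonneg {n : ℕ} {a b : Fin n → ℕ} {p : Pat n} (hp : IsPatZ a b p) (i : Fin n) :
    0 ≤ gtWeightInt p i :=
  Finset.sum_nonneg fun j _ => sub_nonneg.2 (hp.2.2.1 i j)

lemma gtWeightInt_add {n : ℕ} (p q : Pat n) (i : Fin n) :
    gtWeightInt (p + q) i = gtWeightInt p i + gtWeightInt q i := by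
  simp only [gtWeightInt, Pi.add_apply, ← Finset.sum_add_distrib]
  congr 1; funext j; ring

lemma gtWeightInt_sum {n : ℕ} (S : Finset (Pat n)) (i : Fin n) :
    gtWeightInt (∑ p ∈ S, p) i = ∑ p ∈ S, gtWeightInt p i := by
  classical
  induction S using Finset.induction with
  | empty => simp [gtWeightInt]
  | insert _ _ hnotmem ih =>
      rw [Finset.sum_insert hnotmem, gtWeightInt_add, ih, Finset.sum_insert hnotmem]

/-! ### Existence of a tight pattern -/

/-- A real pattern tight on `E` yields an integer one (entrywise floor). -/
lemma floor_tight {n : ℕ} (lam mu : Fin n → ℕ) (E : Finset (Cst n))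
    (y : Fin (n + 1) → Fin n → ℝ) (hy : y ∈ GTPolytope n lam mu)
    (ht : ∀ e ∈ E, slackR e y = 0) :
    ∃ p₀ : Pat n, IsPatZ lam mu p₀ ∧ ∀ e ∈ E, slackZ e p₀ = 0 := by
  obtain ⟨h1, h2, h3, h4⟩ := hy
  refine ⟨fun i j => ⌊y i j⌋, ⟨fun j => ?_, fun j => ?_, fun i j => ?_, fun i j h => ?_⟩,
    fun e he => ?_⟩
  · show ⌊y 0 j⌋ = _; rw [h1 j]; exact_mod_cast Int.floor_natCast _
  · show ⌊y (Fin.last n) j⌋ = _; rw [h2 j]; exact_mod_cast Int.floor_natCast _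
  · exact Int.floor_le_floor (h3 i j)
  · exact Int.floor_le_floor (h4 i j h)
  · have := ht e he
    rcases e with ⟨i, j⟩ | ⟨i, j⟩
    · simp only [slackR] at this
      have : y i.castSucc j = y i.succ j := by linarith
      simp [slackZ, this]
    · by_cases h : (j : ℕ) + 1 < n
      · simp only [slackR, dif_pos h] at this
        have : y i.succ ⟨(j : ℕ) + 1, h⟩ = y i.castSucc j := by linarith
        simp [slackZ, dif_pos h, this]
      · simp [slackZ, dif_neg h]

/-- If arbitrarily stretched integer patterns have small slack on `E`, then there is
a real pattern of shape `lam/mu` tight on `E`. -/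
lemma realTight_of_unbounded {n : ℕ} (kap lam mu nu : Fin n → ℕ) (cstar : ℤ)
    (E : Finset (Cst n))
    (H : ∀ r : ℕ, ∃ m : ℕ, r ≤ m ∧ ∃ Q : Pat n,
      IsPatZ (fun i => kap i + m * lam i) (fun i => nu i + m * mu i) Q ∧
      ∀ e ∈ E, slackZ e Q ≤ cstar) :
    ∃ y, y ∈ GTPolytope n lam mu ∧ ∀ e ∈ E, slackR e y = 0 := by
  choose m hm Q hQ hsl using fun k => H (k + 1)
  have hm1 : ∀ k, 1 ≤ m k := fun k => le_trans (Nat.le_add_left 1 k) (hm k)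
  have hmpos : ∀ k, (0 : ℝ) < (m k : ℝ) := fun k => by exact_mod_cast (hm1 k)
  set y : ℕ → Fin (n + 1) → Fin n → ℝ := fun k i j => (Q k i j : ℝ) / (m k : ℝ) with hy
  -- bounds
  set Bd : ℝ := ((Finset.univ.sup (fun j : Fin n => kap j + lam j) : ℕ) : ℝ) with hBd
  have hyb : ∀ k i j, y k i j ∈ Set.Icc (0 : ℝ) Bd := by
    intro k i j
    constructor
    · apply div_nonneg _ (le_of_lt (hmpos k))
      have := bot_le_pat (hQ k) i j
      have h0 : (0 : ℤ) ≤ ((nu j.rev + m k * mu j.rev : ℕ) : ℤ) := Int.natCast_nonneg _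
      exact_mod_cast le_trans h0 this
    · rw [div_le_iff₀ (hmpos k)]
      have h1 := pat_le_top (hQ k) i j
      have h2 : ((kap j.rev + m k * lam j.rev : ℕ) : ℝ) ≤ Bd * (m k : ℝ) := by
        have hsup : kap j.rev + lam j.rev ≤ Finset.univ.sup (fun j : Fin n => kap j + lam j) :=
          Finset.le_sup (f := fun j : Fin n => kap j + lam j) (Finset.mem_univ j.rev)
        have : kap j.rev + m k * lam j.rev ≤ (kap j.rev + lam j.rev) * m k := by
          have := hm1 k; nlinarith
        calc ((kap j.rev + m k * lam j.rev : ℕ) : ℝ)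
            ≤ (((kap j.rev + lam j.rev) * m k : ℕ) : ℝ) := by exact_mod_cast this
          _ ≤ Bd * (m k : ℝ) := by
              have hb : ((kap j.rev + lam j.rev : ℕ) : ℝ) ≤ Bd := by
                rw [hBd]; exact_mod_cast hsup
              push_cast at hb ⊢
              nlinarith [le_of_lt (hmpos k)]
      calc (Q k i j : ℝ) ≤ ((kap j.rev + m k * lam j.rev : ℕ) : ℝ) := by exact_mod_cast h1
        _ ≤ Bd * (m k : ℝ) := h2
  -- compactness
  have hcomp : IsCompact (Set.univ.pi fun _ : Fin (n + 1) =>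
      Set.univ.pi fun _ : Fin n => Set.Icc (0 : ℝ) Bd) :=
    isCompact_univ_pi fun _ => isCompact_univ_pi fun _ => isCompact_Icc
  have hmem : ∀ k, y k ∈ (Set.univ.pi fun _ : Fin (n + 1) =>
      Set.univ.pi fun _ : Fin n => Set.Icc (0 : ℝ) Bd) := by
    intro k
    simp only [Set.mem_pi, Set.mem_univ, forall_true_left]
    exact fun i j => hyb k i j
  obtain ⟨yli, _, φ, hφ, hconv⟩ := hcomp.tendsto_subseq hmem
  have hcc : ∀ i j, Filter.Tendsto (fun k => y (φ k) i j) Filter.atTop (nhds (yli i j)) := by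
    intro i j
    have h1 := (tendsto_pi_nhds.1 hconv) i
    exact (tendsto_pi_nhds.1 h1) j
  -- m ∘ φ → ∞
  have hmtop : Filter.Tendsto (fun k => ((m (φ k) : ℕ) : ℝ)) Filter.atTop Filter.atTop := by
    apply tendsto_natCast_atTop_atTop.comp
    apply Filter.tendsto_atTop_mono (fun k => ?_) Filter.tendsto_id
    calc (k : ℕ) ≤ φ k := hφ.le_apply
      _ ≤ φ k + 1 := Nat.le_succ _
      _ ≤ m (φ k) := hm (φ k)
  have hdiv0 : ∀ c : ℝ, Filter.Tendsto (fun k => c / ((m (φ k) : ℕ) : ℝ))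
      Filter.atTop (nhds 0) := fun c => Filter.Tendsto.div_atTop tendsto_const_nhds hmtop
  refine ⟨yli, ⟨fun j => ?_, fun j => ?_, fun i j => ?_, fun i j h => ?_⟩, fun e he => ?_⟩
  · -- top row
    have hval : ∀ k, y (φ k) 0 j = (kap j.rev : ℝ) / (m (φ k) : ℝ) + (lam j.rev : ℝ) := by
      intro k
      have := (hQ (φ k)).1 j
      simp only [hy]
      rw [this]
      have hne : ((m (φ k) : ℕ) : ℝ) ≠ 0 := ne_of_gt (hmpos (φ k))
      push_cast
      rw [add_div, mul_comm, mul_div_assoc, div_self hne, mul_one]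
    have ht2 : Filter.Tendsto (fun k => y (φ k) 0 j) Filter.atTop
        (nhds ((0 : ℝ) + (lam j.rev : ℝ))) := by
      simp only [hval]
      exact (hdiv0 _).add tendsto_const_nhds
    have := tendsto_nhds_unique (hcc 0 j) ht2
    rw [this, zero_add]
  · -- bottom row
    have hval : ∀ k, y (φ k) (Fin.last n) j = (nu j.rev : ℝ) / (m (φ k) : ℝ) + (mu j.rev : ℝ) := by
      intro k
      have := (hQ (φ k)).2.1 j
      simp only [hy]
      rw [this]
      have hne : ((m (φ k) : ℕ) : ℝ) ≠ 0 := ne_of_gt (hmpos (φ k))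
      push_cast
      rw [add_div, mul_comm, mul_div_assoc, div_self hne, mul_one]
    have ht2 : Filter.Tendsto (fun k => y (φ k) (Fin.last n) j) Filter.atTop
        (nhds ((0 : ℝ) + (mu j.rev : ℝ))) := by
      simp only [hval]
      exact (hdiv0 _).add tendsto_const_nhds
    have := tendsto_nhds_unique (hcc (Fin.last n) j) ht2
    rw [this, zero_add]
  · -- vertical inequality
    refine le_of_tendsto_of_tendsto' (hcc i.succ j) (hcc i.castSucc j) (fun k => ?_)
    apply div_le_div_of_nonneg_right _ (hmpos (φ k)).le
    exact_mod_cast (hQ (φ k)).2.2.1 i j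
  · -- diagonal inequality
    refine le_of_tendsto_of_tendsto' (hcc i.castSucc j) (hcc i.succ ⟨(j : ℕ) + 1, h⟩) (fun k => ?_)
    apply div_le_div_of_nonneg_right _ (hmpos (φ k)).le
    exact_mod_cast (hQ (φ k)).2.2.2 i j h
  · -- tightness on E
    have hsR : ∀ k, slackR e (y (φ k)) = ((slackZ e (Q (φ k)) : ℤ) : ℝ) / (m (φ k) : ℝ) := by
      intro k
      rcases e with ⟨i, j⟩ | ⟨i, j⟩
      · simp only [slackR, slackZ, hy]
        push_cast
        rw [div_sub_div_same]
      · by_cases h : (j : ℕ) + 1 < n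
        · simp only [slackR, slackZ, dif_pos h, hy]
          push_cast
          rw [div_sub_div_same]
        · simp [slackR, slackZ, dif_neg h]
    have hlim1 : Filter.Tendsto (fun k => slackR e (y (φ k))) Filter.atTop (nhds (slackR e yli)) := by
      rcases e with ⟨i, j⟩ | ⟨i, j⟩
      · exact (hcc i.castSucc j).sub (hcc i.succ j)
      · by_cases h : (j : ℕ) + 1 < n
        · simpa only [slackR, dif_pos h] using (hcc i.succ ⟨(j : ℕ) + 1, h⟩).sub (hcc i.castSucc j)
        · simpa only [slackR, dif_neg h] using tendsto_const_nhds
    have hlim2 : Filter.Tendsto (fun k => slackR e (y (φ k))) Filter.atTop (nhds 0) := by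
      apply squeeze_zero (fun k => ?_) (fun k => ?_) (hdiv0 (max 0 (cstar : ℝ)))
      · rw [hsR k]
        apply div_nonneg _ (le_of_lt (hmpos (φ k)))
        exact_mod_cast slackZ_nonneg (hQ (φ k)) e
      · rw [hsR k]
        apply div_le_div_of_nonneg_right _ (hmpos (φ k)).le
        have := hsl (φ k) e he
        have : ((slackZ e (Q (φ k)) : ℤ) : ℝ) ≤ (cstar : ℝ) := by exact_mod_cast this
        exact le_trans this (le_max_right _ _)
    exact tendsto_nhds_unique hlim1 hlim2

lemma exists_tight_r {n : ℕ} (kap lam mu nu : Fin n → ℕ) (cstar : ℤ) :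
    ∃ r : ℕ, ∀ m : ℕ, r ≤ m → ∀ Q : Pat n,
      IsPatZ (fun i => kap i + m * lam i) (fun i => nu i + m * mu i) Q →
      ∃ p₀ : Pat n, IsPatZ lam mu p₀ ∧ ∀ e : Cst n, slackZ e Q ≤ cstar → slackZ e p₀ = 0 := by
  classical
  have key : ∀ E : Finset (Cst n), ∃ rE : ℕ, ∀ m : ℕ, rE ≤ m → ∀ Q : Pat n,
      IsPatZ (fun i => kap i + m * lam i) (fun i => nu i + m * mu i) Q →
      (∀ e ∈ E, slackZ e Q ≤ cstar) →
      ∃ p₀ : Pat n, IsPatZ lam mu p₀ ∧ ∀ e ∈ E, slackZ e p₀ = 0 := by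
    intro E
    by_cases hRT : ∃ y, y ∈ GTPolytope n lam mu ∧ ∀ e ∈ E, slackR e y = 0
    · obtain ⟨y, hy, ht⟩ := hRT
      obtain ⟨p₀, hp₀, htz⟩ := floor_tight lam mu E y hy ht
      exact ⟨0, fun m _ Q _ _ => ⟨p₀, hp₀, htz⟩⟩
    · by_contra hcon
      push_neg at hcon
      apply hRT
      apply realTight_of_unbounded kap lam mu nu cstar E
      intro r
      obtain ⟨m, hrm, Q, hQ, hsl, -⟩ := hcon r
      exact ⟨m, hrm, Q, hQ, hsl⟩
  choose rE hrE using key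
  refine ⟨Finset.univ.sup rE, fun m hm Q hQ => ?_⟩
  set E : Finset (Cst n) := Finset.univ.filter (fun e => slackZ e Q ≤ cstar) with hE
  obtain ⟨p₀, h1, h2⟩ := hrE E m
      (le_trans (Finset.le_sup (f := rE) (Finset.mem_univ E)) hm) Q hQ
      (fun e he => (Finset.mem_filter.1 he).2)
  exact ⟨p₀, h1, fun e hcond => h2 e (Finset.mem_filter.2 ⟨Finset.mem_univ e, hcond⟩)⟩

/-! ### Combinatorial part -/

def shT {n : ℕ} (kap lam : Fin n → ℕ) (c : ℕ) : Fin n → ℕ := fun i => kap i + c * lam i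

def expo {n : ℕ} (p : Pat n) : Fin n →₀ ℕ :=
  Finsupp.equivFunOnFinite.symm (fun i => (gtWeightInt p i).toNat)

def expS {n : ℕ} (S : Finset (Pat n)) : Fin n →₀ ℕ :=
  Finsupp.equivFunOnFinite.symm (fun i => ∑ p ∈ S, (gtWeightInt p i).toNat)

lemma IsPatZ.congr {n : ℕ} {a b a' b' : Fin n → ℕ} {p : Pat n} (h : IsPatZ a b p)
    (ha : ∀ i, a i = a' i) (hb : ∀ i, b i = b' i) : IsPatZ a' b' p := by
  have h1 : a = a' := funext ha
  have h2 : b = b' := funext hb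
  rwa [h1, h2] at h

lemma toNat_sum_of_nonneg {α : Type*} (s : Finset α) (f : α → ℤ) (h : ∀ x ∈ s, 0 ≤ f x) :
    (∑ x ∈ s, f x).toNat = ∑ x ∈ s, (f x).toNat := by
  classical
  induction s using Finset.induction with
  | empty => simp
  | @insert a s ha ih =>
      rw [Finset.sum_insert ha, Finset.sum_insert ha,
        Int.toNat_add (h a (Finset.mem_insert_self a s))
          (Finset.sum_nonneg fun x hx => h x (Finset.mem_insert_of_mem hx)),
        ih (fun x hx => h x (Finset.mem_insert_of_mem hx))]

section Main

variable {n : ℕ} {kap lam mu nu : Fin n → ℕ} {T : Finset (Pat n)}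

/-- Sum of a subset of `T` is a pattern of the dilated shape. -/
lemma sum_subset_T_isPat (hT : ∀ p : Pat n, p ∈ T ↔ IsPatZ lam mu p)
    {S : Finset (Pat n)} (hS : S ⊆ T) :
    IsPatZ (fun i => S.card * lam i) (fun i => S.card * mu i) (∑ p ∈ S, p) := by
  classical
  induction S using Finset.induction with
  | empty =>
      refine ⟨fun j => ?_, fun j => ?_, fun i j => le_refl _, fun i j h => le_refl _⟩ <;> simp
  | @insert p S hps ih =>
      have hp : IsPatZ lam mu p := (hT p).1 (hS (Finset.mem_insert_self p S))
      have hST : S ⊆ T := fun x hx => hS (Finset.mem_insert_of_mem hx)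
      have h2 := hp.add (ih hST)
      rw [Finset.sum_insert hps]
      refine h2.congr (fun i => ?_) (fun i => ?_) <;>
        · rw [Finset.card_insert_of_notMem hps]; ring

/-- Additivity of the exponent. -/
lemma expo_add_sum (hT : ∀ p : Pat n, p ∈ T ↔ IsPatZ lam mu p)
    {a b : Fin n → ℕ} {q : Pat n} (hq : IsPatZ a b q) {S : Finset (Pat n)} (hS : S ⊆ T) :
    expo (q + ∑ p ∈ S, p) = expS S + expo q := by
  have hwp : ∀ p ∈ S, ∀ i, 0 ≤ gtWeightInt p i := fun p hp i =>
    gtWeightInt_nonneg ((hT p).1 (hS hp)) i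
  ext i
  simp only [expo, expS, Finsupp.add_apply, Finsupp.coe_equivFunOnFinite_symm]
  rw [gtWeightInt_add, gtWeightInt_sum,
    Int.toNat_add (gtWeightInt_nonneg hq i) (Finset.sum_nonneg fun p hp => hwp p hp i),
    toNat_sum_of_nonneg _ _ (fun p hp => hwp p hp i)]
  ring

end Main

section Main2

variable {n : ℕ} {kap lam mu nu : Fin n → ℕ} {T : Finset (Pat n)}

/-- Removing an element of `S` from the subtraction: still a pattern (upward closure). -/
lemma erase_step (hT : ∀ p : Pat n, p ∈ T ↔ IsPatZ lam mu p)
    {Q p₀ : Pat n} {S : Finset (Pat n)} {c : ℕ} (hp₀ : p₀ ∈ S) (hp₀T : p₀ ∈ T)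
    (hR : IsPatZ (shT kap lam c) (shT nu mu c) (Q - ∑ p ∈ S, p)) :
    IsPatZ (shT kap lam (c + 1)) (shT nu mu (c + 1)) (Q - ∑ p ∈ (S.erase p₀), p) := by
  classical
  have hsum : p₀ + ∑ p ∈ S.erase p₀, p = ∑ p ∈ S, p := Finset.add_sum_erase S (fun p => p) hp₀
  have heq : Q - ∑ p ∈ (S.erase p₀), p = (Q - ∑ p ∈ S, p) + p₀ := by
    rw [← hsum]; abel
  rw [heq]
  have := hR.add ((hT p₀).1 hp₀T)
  refine this.congr (fun i => ?_) (fun i => ?_) <;> · simp only [shT]; ring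

/-- The key cone step: subtracting additionally the tight pattern `p₀`. -/
lemma cone_step (hT : ∀ p : Pat n, p ∈ T ↔ IsPatZ lam mu p) (D : ℕ)
    (hD : ∀ p ∈ T, ∀ e : Cst n, slackZ e p ≤ (D : ℤ))
    {m c : ℕ} {Q p₀ : Pat n} {S : Finset (Pat n)}
    (hQ : IsPatZ (shT kap lam m) (shT nu mu m) Q)
    (hp₀T : p₀ ∈ T)
    (htight : ∀ e : Cst n, slackZ e Q ≤ (T.card * D : ℤ) → slackZ e p₀ = 0)
    (hS : S ⊆ T) (hp₀S : p₀ ∉ S)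
    (hR : IsPatZ (shT kap lam (c + 1)) (shT nu mu (c + 1)) (Q - ∑ p ∈ S, p)) :
    IsPatZ (shT kap lam c) (shT nu mu c) (Q - ∑ p ∈ (insert p₀ S), p) := by
  classical
  have heq : Q - ∑ p ∈ (insert p₀ S), p = (Q - ∑ p ∈ S, p) - p₀ := by
    rw [Finset.sum_insert hp₀S]; abel
  rw [heq]
  set R : Pat n := Q - ∑ p ∈ S, p with hRdef
  have hp₀P : IsPatZ lam mu p₀ := (hT p₀).1 hp₀T
  rw [isPatZ_iff_slack]
  refine ⟨fun j => ?_, fun j => ?_, fun e => ?_⟩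
  · have h1 := hR.1 j
    have h2 := hp₀P.1 j
    simp only [Pi.sub_apply, h1, h2, shT]
    push_cast; ring
  · have h1 := hR.2.1 j
    have h2 := hp₀P.2.1 j
    simp only [Pi.sub_apply, h1, h2, shT]
    push_cast; ring
  · rw [slackZ_sub]
    by_cases hsQ : slackZ e Q ≤ (T.card * D : ℤ)
    · rw [htight e hsQ, sub_zero]
      exact slackZ_nonneg hR e
    · push_neg at hsQ
      have hsR : slackZ e R = slackZ e Q - ∑ p ∈ S, slackZ e p := by
        rw [hRdef, slackZ_sub, slackZ_sum]
      have hcard : (S.card : ℤ) ≤ (T.card : ℤ) - 1 := by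
        have : S.card < T.card := Finset.card_lt_card
          (Finset.ssubset_iff_of_subset hS |>.2 ⟨p₀, hp₀T, hp₀S⟩)
        omega
      have hsum : ∑ p ∈ S, slackZ e p ≤ (S.card : ℤ) * D := by
        have := Finset.sum_le_card_nsmul S (fun p => slackZ e p) (D : ℤ)
          (fun p hp => hD p (hS hp) e)
        simpa [nsmul_eq_mul] using this
      have hp₀D : slackZ e p₀ ≤ (D : ℤ) := hD p₀ hp₀T e
      have hDnn : (0 : ℤ) ≤ (D : ℤ) := Int.natCast_nonneg _
      rw [hsR]
      nlinarith [Int.natCast_nonneg S.card, Int.natCast_nonneg T.card]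

end Main2

lemma skewSchur_eq_sum' (n : ℕ) (a b : Fin n → ℕ) :
    skewSchur n a b = ∑ p ∈ Pats a b, MvPolynomial.monomial (expo p) (1 : ℂ) :=
  skewSchur_eq_sum n a b

section Main3

variable {n : ℕ} {kap lam mu nu : Fin n → ℕ} {T : Finset (Pat n)}

lemma claim0 (hT : ∀ p : Pat n, p ∈ T ↔ IsPatZ lam mu p) (D : ℕ)
    (hD : ∀ p ∈ T, ∀ e : Cst n, slackZ e p ≤ (D : ℤ))
    (m : ℕ) (hmN : T.card ≤ m)
    (hp0 : ∀ Q : Pat n, IsPatZ (shT kap lam m) (shT nu mu m) Q →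
      ∃ p₀ ∈ T, ∀ e : Cst n, slackZ e Q ≤ (T.card * D : ℤ) → slackZ e p₀ = 0) :
    ∑ S ∈ T.powerset, MvPolynomial.monomial (expS S) ((-1 : ℂ) ^ S.card) *
      skewSchur n (shT kap lam (m - S.card)) (shT nu mu (m - S.card)) = 0 := by
  classical
  set Pm : Finset (Pat n) := Pats (shT kap lam m) (shT nu mu m) with hPm
  set Bcond : Finset (Pat n) → Pat n → Prop := fun S Q =>
    (Q - ∑ p ∈ S, p) ∈ Pats (shT kap lam (m - S.card)) (shT nu mu (m - S.card)) with hBcond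
  have hBiff : ∀ (S : Finset (Pat n)) (Q : Pat n), Bcond S Q ↔
      (Q - ∑ p ∈ S, p) ∈ Pats (shT kap lam (m - S.card)) (shT nu mu (m - S.card)) :=
    fun _ _ => Iff.rfl
  have hexp : ∀ S ∈ T.powerset,
      MvPolynomial.monomial (expS S) ((-1 : ℂ) ^ S.card) *
        skewSchur n (shT kap lam (m - S.card)) (shT nu mu (m - S.card))
      = ∑ Q ∈ Pm.filter (fun Q => Bcond S Q),
          MvPolynomial.monomial (expo Q) ((-1 : ℂ) ^ S.card) := by
    intro S hSmem
    have hS : S ⊆ T := Finset.mem_powerset.1 hSmem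
    have hcard : S.card ≤ m := le_trans (Finset.card_le_card hS) hmN
    rw [skewSchur_eq_sum', Finset.mul_sum]
    have hterm : ∀ q, MvPolynomial.monomial (expS S) ((-1 : ℂ) ^ S.card) *
        MvPolynomial.monomial (expo q) (1 : ℂ)
        = MvPolynomial.monomial (expS S + expo q) ((-1 : ℂ) ^ S.card) := by
      intro q; rw [MvPolynomial.monomial_mul, mul_one]
    simp only [hterm]
    refine Finset.sum_nbij' (fun q => q + ∑ p ∈ S, p) (fun Q => Q - ∑ p ∈ S, p)
      ?_ ?_ ?_ ?_ ?_
    · intro q hq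
      rw [Finset.mem_filter]
      refine ⟨?_, ?_⟩
      · rw [hPm, mem_Pats]
        have h1 := (mem_Pats.1 hq).add (sum_subset_T_isPat hT hS)
        have hc : (m - S.card) + S.card = m := by omega
        refine h1.congr (fun i => ?_) (fun i => ?_) <;>
          · simp only [shT]; rw [← hc, Nat.add_sub_cancel]; ring
      · rw [hBiff]
        rw [add_sub_cancel_right]
        exact hq
    · intro Q hQ
      have := (Finset.mem_filter.1 hQ).2
      exact (hBiff _ _).1 this
    · intro q _; exact add_sub_cancel_right q _
    · intro Q _; exact sub_add_cancel Q _
    · intro q hq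
      rw [expo_add_sum hT (mem_Pats.1 hq) hS]
  rw [Finset.sum_congr rfl hexp]
  have hswap : ∑ S ∈ T.powerset, ∑ Q ∈ Pm.filter (fun Q => Bcond S Q),
      MvPolynomial.monomial (expo Q) ((-1 : ℂ) ^ S.card)
      = ∑ Q ∈ Pm, ∑ S ∈ T.powerset.filter (fun S => Bcond S Q),
          MvPolynomial.monomial (expo Q) ((-1 : ℂ) ^ S.card) := by
    simp only [Finset.sum_filter]
    exact Finset.sum_comm
  rw [hswap]
  apply Finset.sum_eq_zero
  intro Q hQm
  rw [← map_sum]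
  have hQpat : IsPatZ (shT kap lam m) (shT nu mu m) Q := by
    rw [hPm, mem_Pats] at hQm; exact hQm
  obtain ⟨p₀, hp₀T, htight⟩ := hp0 Q hQpat
  have hzero : ∑ S ∈ T.powerset.filter (fun S => Bcond S Q), ((-1 : ℂ) ^ S.card) = 0 := by
    set s : Finset (Finset (Pat n)) := T.powerset.filter (fun S => Bcond S Q) with hs
    set g : Finset (Pat n) → Finset (Pat n) :=
      fun S => if p₀ ∈ S then S.erase p₀ else insert p₀ S with hg
    have hadd : ∀ S, ((-1 : ℂ) ^ S.card) + ((-1 : ℂ) ^ (g S).card) = 0 := by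
      intro S
      by_cases hp : p₀ ∈ S
      · simp only [hg, if_pos hp]
        have hc : S.card = (S.erase p₀).card + 1 := (Finset.card_erase_add_one hp).symm
        rw [hc, pow_succ]; ring
      · simp only [hg, if_neg hp]
        rw [Finset.card_insert_of_notMem hp, pow_succ]; ring
    have hne : ∀ S, g S ≠ S := by
      intro S hEq
      by_cases hp : p₀ ∈ S
      · simp only [hg, if_pos hp] at hEq
        have := Finset.notMem_erase p₀ S
        rw [hEq] at this; exact this hp
      · simp only [hg, if_neg hp] at hEq
        have : p₀ ∈ insert p₀ S := Finset.mem_insert_self _ _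
        rw [hEq] at this; exact hp this
    have hmem : ∀ S ∈ s, g S ∈ s := by
      intro S hSm
      obtain ⟨hSpow, hSB⟩ := Finset.mem_filter.1 hSm
      have hS : S ⊆ T := Finset.mem_powerset.1 hSpow
      have hSB' := (hBiff _ _).1 hSB
      by_cases hp : p₀ ∈ S
      · simp only [hg, if_pos hp]
        rw [hs, Finset.mem_filter]
        refine ⟨Finset.mem_powerset.2 (le_trans (Finset.erase_subset p₀ S) hS), ?_⟩
        rw [hBiff]
        rw [mem_Pats] at hSB' ⊢
        have hstep := erase_step hT hp (hS hp) hSB'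
        have hc : m - (S.erase p₀).card = (m - S.card) + 1 := by
          rw [Finset.card_erase_of_mem hp]
          have h1 : 1 ≤ S.card := Finset.card_pos.2 ⟨p₀, hp⟩
          have h2 : S.card ≤ m := le_trans (Finset.card_le_card hS) hmN
          omega
        rw [hc]
        exact hstep
      · simp only [hg, if_neg hp]
        rw [hs, Finset.mem_filter]
        have hssub : S.card < T.card := Finset.card_lt_card
          (Finset.ssubset_iff_of_subset hS |>.2 ⟨p₀, hp₀T, hp⟩)
        refine ⟨Finset.mem_powerset.2 (Finset.insert_subset hp₀T hS), ?_⟩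
        rw [hBiff]
        rw [mem_Pats] at hSB' ⊢
        have hc1 : m - S.card = (m - S.card - 1) + 1 := by omega
        rw [hc1] at hSB'
        have hstep := cone_step hT D hD hQpat hp₀T htight hS hp hSB'
        have hc2 : m - (insert p₀ S).card = m - S.card - 1 := by
          rw [Finset.card_insert_of_notMem hp]; omega
        rw [hc2]
        exact hstep
    have hgg : ∀ S : Finset (Pat n), g (g S) = S := by
      intro S
      by_cases hp : p₀ ∈ S
      · simp only [hg, if_pos hp, if_neg (Finset.notMem_erase p₀ S)]
        exact Finset.insert_erase hp
      · simp only [hg, if_neg hp, if_pos (Finset.mem_insert_self p₀ S)]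
        exact Finset.erase_insert hp
    exact Finset.sum_involution (fun S _ => g S) (fun S _ => hadd S)
      (fun S _ _ => hne S) (fun S hS => hmem S hS) (fun S _ => hgg S)
  rw [hzero, map_zero]

end Main3

theorem schur_recursion_patterns (n : ℕ) (hn : 1 ≤ n)
    (kap lam mu nu : Fin n → ℕ)
    (hkap : Antitone kap) (hlam : Antitone lam) (hmu : Antitone mu) (hnu : Antitone nu)
    (hml : ∀ i, mu i ≤ lam i)
    (k : ℕ) (hk : 0 < k) (hincl : ∀ i, nu i + k * mu i ≤ kap i + k * lam i)
    (T : Finset (Fin (n + 1) → Fin n → ℤ))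
    (hT : (T : Set (Fin (n + 1) → Fin n → ℤ)) = {p | patC p ∈ GTPolytope n lam mu}) :
    ∃ r : ℕ, ∀ l : ℕ, r ≤ l →
      skewSchur n (fun i => kap i + (l + T.card) * lam i)
          (fun i => nu i + (l + T.card) * mu i) =
        ∑ S ∈ T.powerset.filter (fun S => S.Nonempty),
          MvPolynomial.monomial
              (Finsupp.equivFunOnFinite.symm (fun i => ∑ p ∈ S, (gtWeightInt p i).toNat))
              ((-1 : ℂ) ^ (1 + S.card)) *
            skewSchur n (fun i => kap i + (l + T.card - S.card) * lam i)
              (fun i => nu i + (l + T.card - S.card) * mu i) := by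
  classical
  have hTmem : ∀ p : Pat n, p ∈ T ↔ IsPatZ lam mu p := by
    intro p
    rw [← patC_mem_iff]
    constructor
    · intro hp
      have h2 : p ∈ (T : Set (Pat n)) := hp
      rw [hT] at h2; exact h2
    · intro hp
      have h2 : p ∈ ({p : Pat n | patC p ∈ GTPolytope n lam mu} : Set (Pat n)) := hp
      rw [← hT] at h2; exact h2
  set D : ℕ := T.sup (fun p => Finset.univ.sup fun e : Cst n => (slackZ e p).toNat) with hDdef
  have hD : ∀ p ∈ T, ∀ e : Cst n, slackZ e p ≤ (D : ℤ) := by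
    intro p hp e
    calc slackZ e p ≤ ((slackZ e p).toNat : ℤ) := Int.self_le_toNat _
      _ ≤ ((Finset.univ.sup fun e : Cst n => (slackZ e p).toNat : ℕ) : ℤ) := by
          exact_mod_cast Finset.le_sup (f := fun e : Cst n => (slackZ e p).toNat)
            (Finset.mem_univ e)
      _ ≤ (D : ℤ) := by
          exact_mod_cast Finset.le_sup
            (f := fun p => Finset.univ.sup fun e : Cst n => (slackZ e p).toNat) hp
  obtain ⟨r, hr⟩ := exists_tight_r kap lam mu nu (T.card * D : ℤ)
  refine ⟨r, fun l hl => ?_⟩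
  have hp0 : ∀ Q : Pat n, IsPatZ (shT kap lam (l + T.card)) (shT nu mu (l + T.card)) Q →
      ∃ p₀ ∈ T, ∀ e : Cst n, slackZ e Q ≤ (T.card * D : ℤ) → slackZ e p₀ = 0 := by
    intro Q hQ
    obtain ⟨p₀, hp₀, ht⟩ := hr (l + T.card) (by omega) Q hQ
    exact ⟨p₀, (hTmem p₀).2 hp₀, ht⟩
  have h0 := claim0 hTmem D hD (l + T.card) (by omega) hp0
  have hsplit := Finset.sum_filter_add_sum_filter_not T.powerset (fun S => S.Nonempty)
    (fun S => MvPolynomial.monomial (expS S) ((-1 : ℂ) ^ S.card) *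
      skewSchur n (shT kap lam (l + T.card - S.card)) (shT nu mu (l + T.card - S.card)))
  rw [h0] at hsplit
  have hemp : T.powerset.filter (fun S => ¬S.Nonempty) = ({∅} : Finset (Finset (Pat n))) := by
    ext S
    simp [Finset.not_nonempty_iff_eq_empty, Finset.mem_powerset]
    intro h; rw [h]; exact Finset.empty_subset T
  rw [hemp, Finset.sum_singleton] at hsplit
  have hFempty : MvPolynomial.monomial (expS (∅ : Finset (Pat n)))
      ((-1 : ℂ) ^ (∅ : Finset (Pat n)).card) *
      skewSchur n (shT kap lam (l + T.card - (∅ : Finset (Pat n)).card))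
        (shT nu mu (l + T.card - (∅ : Finset (Pat n)).card))
      = skewSchur n (shT kap lam (l + T.card)) (shT nu mu (l + T.card)) := by
    have h1 : expS (∅ : Finset (Pat n)) = 0 := by
      ext i; simp [expS]
    rw [h1, Finset.card_empty, pow_zero, Nat.sub_zero]
    rw [MvPolynomial.monomial_zero', MvPolynomial.C_1, one_mul]
  rw [hFempty] at hsplit
  have hkey : skewSchur n (shT kap lam (l + T.card)) (shT nu mu (l + T.card)) =
      ∑ S ∈ T.powerset.filter (fun S => S.Nonempty),
        MvPolynomial.monomial (expS S) ((-1 : ℂ) ^ (1 + S.card)) *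
          skewSchur n (shT kap lam (l + T.card - S.card)) (shT nu mu (l + T.card - S.card)) := by
    have h2 : skewSchur n (shT kap lam (l + T.card)) (shT nu mu (l + T.card)) =
        -∑ S ∈ T.powerset.filter (fun S => S.Nonempty),
          MvPolynomial.monomial (expS S) ((-1 : ℂ) ^ S.card) *
            skewSchur n (shT kap lam (l + T.card - S.card))
              (shT nu mu (l + T.card - S.card)) := by
      linear_combination hsplit
    rw [h2, neg_eq_iff_eq_neg]
    rw [← Finset.sum_neg_distrib]
    apply Finset.sum_congr rfl
    intro S _
    rw [neg_mul_eq_neg_mul, ← map_neg]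
    congr 2
    rw [pow_add]; ring
  exact hkey
end
end
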